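/- arXiv:1811.09560 — 8 statements merged into one kernel-verified Lean document; each statement's English description precedes it below -/
import Mathlib

section
/- Weighted Shearer inequality: Let X_v, v ∈ V, be finitely many discrete random variables on a finite index set V, and let α_U ≥ 0 be a weight for each subset U ⊆ V. Then ∑_{U ⊆ V} α_U · H(X_U) ≥ λ · H(X_V), where λ = min_{v ∈ V} ∑_{U : v ∈ U} α_U and X_U denotes the tuple (X_v)_{v∈U}. -/
set_option linter.unusedSectionVars false


open MeasureTheory ProbabilityTheory Real

/-- Shannon entropy of a random variable with values in a finite set. -/
noncomputable def entropy {Ω : Type*} [MeasurableSpace Ω] (μ : Measure Ω)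
    {S : Type*} [Fintype S] (X : Ω → S) : ℝ :=
  ∑ s : S, Real.negMulLog (μ (X ⁻¹' {s})).toReal

namespace ShearerAux
open Finset

variable {Ω : Type*} [MeasurableSpace Ω] (μ : Measure Ω)

lemma negMulLog_sum_le {ι : Type*} (s : Finset ι) (p : ι → ℝ) (hp : ∀ i ∈ s, 0 ≤ p i) :
    Real.negMulLog (∑ i ∈ s, p i) ≤ ∑ i ∈ s, Real.negMulLog (p i) := by
  have h1 : Real.negMulLog (∑ i ∈ s, p i)
      = ∑ i ∈ s, -(p i) * Real.log (∑ j ∈ s, p j) := by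
    rw [Real.negMulLog, ← Finset.sum_neg_distrib, Finset.sum_mul]
  rw [h1]
  refine Finset.sum_le_sum fun i hi => ?_
  rcases eq_or_lt_of_le (hp i hi) with h0 | h0
  · simp [Real.negMulLog, ← h0]
  · have hle : p i ≤ ∑ j ∈ s, p j := Finset.single_le_sum hp hi
    have := Real.log_le_log h0 hle
    rw [Real.negMulLog, neg_mul]
    nlinarith
lemma gibbs_point {p q : ℝ} (hp : 0 ≤ p) (hq : 0 ≤ q) (h : p ≠ 0 → 0 < q) :
    p * (Real.log q - Real.log p) ≤ q - p := by
  rcases eq_or_lt_of_le hp with h0 | h0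
  · rw [← h0]; simpa using hq
  · have hqp := h h0.ne'
    have h1 : Real.log (q / p) ≤ q / p - 1 := Real.log_le_sub_one_of_pos (div_pos hqp h0)
    rw [Real.log_div hqp.ne' h0.ne'] at h1
    have h2 := mul_le_mul_of_nonneg_left h1 h0.le
    calc p * (Real.log q - Real.log p) ≤ p * (q / p - 1) := h2
      _ = q - p := by field_simp


noncomputable def pm {T : Type*} (Z : Ω → T) (t : T) : ℝ := (μ (Z ⁻¹' {t})).toReal

lemma pm_nonneg {T : Type*} (Z : Ω → T) (t : T) : 0 ≤ pm μ Z t := ENNReal.toReal_nonneg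

lemma entropy_eq_pm {T : Type*} [Fintype T] (Z : Ω → T) :
    entropy μ Z = ∑ t, Real.negMulLog (pm μ Z t) := rfl

variable [IsProbabilityMeasure μ] {T : Type*} [Fintype T] [MeasurableSpace T]
  [MeasurableSingletonClass T]

lemma sum_pm (Z : Ω → T) (hZ : Measurable Z) : ∑ t, pm μ Z t = 1 := by
  have h := MeasureTheory.sum_measure_preimage_singleton (μ := μ) (f := Z) Finset.univ
    (fun y _ => hZ (measurableSet_singleton y))
  rw [Finset.coe_univ, Set.preimage_univ, measure_univ] at h
  have h2 : ∑ t, pm μ Z t = ((∑ b : T, μ (Z ⁻¹' {b}))).toReal :=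
    (ENNReal.toReal_sum (fun a _ => measure_ne_top μ _)).symm
  rw [h2, h, ENNReal.toReal_one]

lemma pm_comp {A : Type*} [DecidableEq A] (Z : Ω → T) (hZ : Measurable Z) (f : T → A) (a : A) :
    pm μ (f ∘ Z) a = ∑ t ∈ univ.filter (fun t => f t = a), pm μ Z t := by
  have key := MeasureTheory.sum_measure_preimage_singleton (μ := μ) (f := Z)
    (univ.filter fun t => f t = a) (fun y _ => hZ (measurableSet_singleton y))
  have hset : (↑(univ.filter fun t => f t = a) : Set T) = f ⁻¹' {a} := by ext t; simp
  have h0 : pm μ (f ∘ Z) a = (μ (Z ⁻¹' (f ⁻¹' {a}))).toReal := rfl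
  rw [h0, ← hset, ← key, ENNReal.toReal_sum (fun a _ => measure_ne_top μ _)]
  rfl

lemma sum_fiber_mul {A : Type*} [Fintype A] [DecidableEq A] (p : T → ℝ) (f : T → A) (L : A → ℝ) :
    ∑ a : A, (∑ t ∈ univ.filter (fun t => f t = a), p t) * L a = ∑ t : T, p t * L (f t) := by
  rw [← Finset.sum_fiberwise Finset.univ f (fun t => p t * L (f t))]
  refine Finset.sum_congr rfl fun a _ => ?_
  rw [Finset.sum_mul]
  exact Finset.sum_congr rfl fun t ht => by rw [(Finset.mem_filter.1 ht).2]

lemma entropy_comp_le {A : Type*} [Fintype A] (Z : Ω → T) (hZ : Measurable Z) (f : T → A) :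
    entropy μ (f ∘ Z) ≤ entropy μ Z := by
  classical
  rw [entropy_eq_pm, entropy_eq_pm]
  calc ∑ a, Real.negMulLog (pm μ (f ∘ Z) a)
      = ∑ a, Real.negMulLog (∑ t ∈ univ.filter (fun t => f t = a), pm μ Z t) := by
        simp_rw [pm_comp μ Z hZ f]
    _ ≤ ∑ a, ∑ t ∈ univ.filter (fun t => f t = a), Real.negMulLog (pm μ Z t) :=
        Finset.sum_le_sum fun a _ => negMulLog_sum_le _ _ (fun t _ => pm_nonneg μ Z t)
    _ = ∑ t, Real.negMulLog (pm μ Z t) := Finset.sum_fiberwise _ _ _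


lemma entropy_submodular {A B C : Type*} [Fintype A] [Fintype B] [Fintype C]
    (Z : Ω → T) (hZ : Measurable Z) (f : T → A) (g : T → B) (rA : A → C) (rB : B → C)
    (hinj : Function.Injective (fun t => (f t, g t)))
    (hcomm : ∀ t, rA (f t) = rB (g t)) :
    entropy μ Z + entropy μ ((rA ∘ f) ∘ Z) ≤ entropy μ (f ∘ Z) + entropy μ (g ∘ Z) := by
  classical
  set p : T → ℝ := pm μ Z with hpdef
  have hp0 : ∀ t, 0 ≤ p t := fun t => pm_nonneg μ Z t
  set pf : A → ℝ := fun a => ∑ t ∈ univ.filter (fun t => f t = a), p t with hpfdef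
  set pg : B → ℝ := fun b => ∑ t ∈ univ.filter (fun t => g t = b), p t with hpgdef
  set ph : C → ℝ := fun c => ∑ t ∈ univ.filter (fun t => rA (f t) = c), p t with hphdef
  have hpf0 : ∀ a, 0 ≤ pf a := fun a => Finset.sum_nonneg fun t _ => hp0 t
  have hpg0 : ∀ b, 0 ≤ pg b := fun b => Finset.sum_nonneg fun t _ => hp0 t
  have hph0 : ∀ c, 0 ≤ ph c := fun c => Finset.sum_nonneg fun t _ => hp0 t
  have hple_f : ∀ t, p t ≤ pf (f t) := fun t =>
    Finset.single_le_sum (fun i _ => hp0 i) (by simp)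
  have hple_g : ∀ t, p t ≤ pg (g t) := fun t =>
    Finset.single_le_sum (fun i _ => hp0 i) (by simp)
  have hple_h : ∀ t, p t ≤ ph (rA (f t)) := fun t =>
    Finset.single_le_sum (fun i _ => hp0 i) (by simp)
  -- rewrite the four entropies
  have eZ : entropy μ Z = ∑ t, Real.negMulLog (p t) := rfl
  have eF : entropy μ (f ∘ Z) = ∑ t, p t * (-(Real.log (pf (f t)))) := by
    rw [entropy_eq_pm]
    rw [← sum_fiber_mul (T := T) p f (fun a => -(Real.log (pf a)))]
    refine Finset.sum_congr rfl fun a _ => ?_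
    rw [pm_comp μ Z hZ f a, Real.negMulLog]
    ring
  have eG : entropy μ (g ∘ Z) = ∑ t, p t * (-(Real.log (pg (g t)))) := by
    rw [entropy_eq_pm]
    rw [← sum_fiber_mul (T := T) p g (fun b => -(Real.log (pg b)))]
    refine Finset.sum_congr rfl fun b _ => ?_
    rw [pm_comp μ Z hZ g b, Real.negMulLog]
    ring
  have eH : entropy μ ((rA ∘ f) ∘ Z) = ∑ t, p t * (-(Real.log (ph (rA (f t))))) := by
    rw [entropy_eq_pm]
    rw [← sum_fiber_mul (T := T) p (fun t => rA (f t)) (fun c => -(Real.log (ph c)))]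
    refine Finset.sum_congr rfl fun c _ => ?_
    rw [pm_comp μ Z hZ (rA ∘ f) c, Real.negMulLog]
    simp only [Function.comp]
    ring
  -- auxiliary q
  set q : T → ℝ := fun t => if p t = 0 then 0 else pf (f t) * pg (g t) / ph (rA (f t)) with hqdef
  have hq0 : ∀ t, 0 ≤ q t := by
    intro t
    by_cases h : p t = 0
    · simp [hqdef, h]
    · simp only [hqdef, if_neg h]
      exact div_nonneg (mul_nonneg (hpf0 _) (hpg0 _)) (hph0 _)
  -- termwise Gibbs
  have key : ∀ t, Real.negMulLog (p t) + p t * (-(Real.log (ph (rA (f t)))))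
      ≤ p t * (-(Real.log (pf (f t)))) + p t * (-(Real.log (pg (g t)))) + (q t - p t) := by
    intro t
    by_cases h0 : p t = 0
    · simp [h0, hqdef]
    · have hppos : 0 < p t := lt_of_le_of_ne (hp0 t) (Ne.symm h0)
      have hfp : 0 < pf (f t) := lt_of_lt_of_le hppos (hple_f t)
      have hgp : 0 < pg (g t) := lt_of_lt_of_le hppos (hple_g t)
      have hhp : 0 < ph (rA (f t)) := lt_of_lt_of_le hppos (hple_h t)
      have hqt : q t = pf (f t) * pg (g t) / ph (rA (f t)) := if_neg h0
      have hqpos : 0 < q t := by rw [hqt]; positivity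
      have gibbs := gibbs_point (hp0 t) hqpos.le (fun _ => hqpos)
      rw [hqt, Real.log_div (mul_ne_zero hfp.ne' hgp.ne') hhp.ne',
        Real.log_mul hfp.ne' hgp.ne', ← hqt] at gibbs
      rw [Real.negMulLog]
      nlinarith [gibbs]
  -- sum of q is at most 1
  have hsq : ∑ t, q t ≤ ∑ t, p t := by
    rw [← Finset.sum_fiberwise Finset.univ (fun t => rA (f t)) q,
        ← Finset.sum_fiberwise Finset.univ (fun t => rA (f t)) p]
    refine Finset.sum_le_sum fun c _ => ?_
    set s : Finset T := univ.filter (fun t => rA (f t) = c ∧ p t ≠ 0) with hsdef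
    have hsub : s ⊆ univ.filter (fun t => rA (f t) = c) := by
      intro t ht
      simp only [hsdef, Finset.mem_filter] at ht ⊢
      exact ⟨ht.1, ht.2.1⟩
    have hq_eq : ∑ t ∈ univ.filter (fun t => rA (f t) = c), q t = ∑ t ∈ s, q t := by
      refine (Finset.sum_subset hsub fun t ht hns => ?_).symm
      simp only [hsdef, Finset.mem_filter] at ht hns
      have : p t = 0 := by
        by_contra hc
        exact hns ⟨ht.1, ht.2, hc⟩
      simp [hqdef, this]
    rw [hq_eq]
    rcases Finset.eq_empty_or_nonempty s with hse | ⟨t0, ht0⟩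
    · rw [hse]; simpa using Finset.sum_nonneg (fun t (_ : t ∈ univ.filter fun t => rA (f t) = c) => hp0 t)
    · simp only [hsdef, Finset.mem_filter] at ht0
      have hphc : 0 < ph c := by
        have h1 : p t0 ≤ ph c := by
          rw [hphdef]
          exact Finset.single_le_sum (f := p) (fun i _ => hp0 i) (by simp [ht0.2.1])
        exact lt_of_lt_of_le (lt_of_le_of_ne (hp0 t0) (Ne.symm ht0.2.2)) h1
      have hq_form : ∑ t ∈ s, q t = (∑ t ∈ s, pf (f t) * pg (g t)) / ph c := by
        rw [Finset.sum_div]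
        refine Finset.sum_congr rfl fun t ht => ?_
        simp only [hsdef, Finset.mem_filter] at ht
        rw [hqdef]
        simp only [if_neg ht.2.2, ht.2.1]
      -- numerator bound
      have hnum : ∑ t ∈ s, pf (f t) * pg (g t)
          ≤ (∑ a ∈ univ.filter (fun a => rA a = c), pf a)
            * (∑ b ∈ univ.filter (fun b => rB b = c), pg b) := by
        have himg : ∑ t ∈ s, pf (f t) * pg (g t)
            = ∑ x ∈ s.image (fun t => (f t, g t)), pf x.1 * pg x.2 := by
          rw [Finset.sum_image (fun t _ t' _ hx => hinj hx)]
        rw [himg, Finset.sum_mul_sum, ← Finset.sum_product']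
        refine Finset.sum_le_sum_of_subset_of_nonneg ?_
          (fun x _ _ => mul_nonneg (hpf0 _) (hpg0 _))
        intro x hx
        obtain ⟨t, ht, hxt⟩ := Finset.mem_image.1 hx
        simp only [hsdef, Finset.mem_filter] at ht
        subst hxt
        rw [Finset.mem_product]
        constructor
        · simp only [Finset.mem_filter]
          exact ⟨Finset.mem_univ _, ht.2.1⟩
        · simp only [Finset.mem_filter]
          exact ⟨Finset.mem_univ _, by rw [← hcomm t]; exact ht.2.1⟩
      -- marginals of marginals
      have hmargA : ∑ a ∈ univ.filter (fun a => rA a = c), pf a = ph c := by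
        rw [hpfdef, hphdef]
        rw [Finset.sum_fiberwise_eq_sum_filter Finset.univ (univ.filter (fun a => rA a = c)) f p]
        refine Finset.sum_congr ?_ fun _ _ => rfl
        ext t
        simp
      have hmargB : ∑ b ∈ univ.filter (fun b => rB b = c), pg b = ph c := by
        rw [hpgdef, hphdef]
        rw [Finset.sum_fiberwise_eq_sum_filter Finset.univ (univ.filter (fun b => rB b = c)) g p]
        refine Finset.sum_congr ?_ fun _ _ => rfl
        ext t
        simp [hcomm t]
      rw [hq_form]
      rw [div_le_iff₀ hphc]
      calc ∑ t ∈ s, pf (f t) * pg (g t) ≤ _ := hnum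
        _ = ph c * ph c := by rw [hmargA, hmargB]
  -- combine
  rw [eZ, eF, eG, eH, ← Finset.sum_add_distrib, ← Finset.sum_add_distrib]
  calc ∑ t, (Real.negMulLog (p t) + p t * (-(Real.log (ph (rA (f t))))))
      ≤ ∑ t, (p t * (-(Real.log (pf (f t)))) + p t * (-(Real.log (pg (g t)))) + (q t - p t)) :=
        Finset.sum_le_sum fun t _ => key t
    _ = (∑ t, (p t * (-(Real.log (pf (f t)))) + p t * (-(Real.log (pg (g t))))))
        + ((∑ t, q t) - ∑ t, p t) := by
        rw [Finset.sum_add_distrib, Finset.sum_sub_distrib]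
    _ ≤ ∑ t, (p t * (-(Real.log (pf (f t)))) + p t * (-(Real.log (pg (g t))))) := by
        have : (∑ t, q t) - ∑ t, p t ≤ 0 := sub_nonpos.2 hsq
        linarith


section Abstract
variable {V : Type*} [Fintype V] [DecidableEq V]

lemma shearer_abstract [Nonempty V] (f : Finset V → ℝ) (hempty : f ∅ = 0)
    (hmono : ∀ A B : Finset V, A ⊆ B → f A ≤ f B)
    (hsub : ∀ A B : Finset V, f (A ∪ B) + f (A ∩ B) ≤ f A + f B)
    (α : Finset V → ℝ) (hα : ∀ U, 0 ≤ α U) :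
    ∑ U : Finset V, α U * f U ≥
      (Finset.univ.inf' Finset.univ_nonempty
          (fun v : V => ∑ U ∈ Finset.univ.filter (fun U : Finset V => v ∈ U), α U)) *
        f Finset.univ := by
  classical
  set n := Fintype.card V with hn
  set e := Fintype.equivFin V with he
  set P : ℕ → Finset V := fun i => univ.filter (fun v => (e v : ℕ) < i) with hP
  set d : V → ℝ := fun v => f (P ((e v : ℕ) + 1)) - f (P (e v)) with hd
  have hP0 : P 0 = ∅ := by ext v; simp [hP]
  have hPn : P n = univ := by ext v; simp [hP, (e v).isLt, hn]
  have hvP : ∀ v, v ∉ P (e v) := by intro v; simp [hP]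
  have hPsucc : ∀ v : V, P ((e v : ℕ) + 1) = insert v (P (e v)) := by
    intro v
    ext w
    simp only [hP, Finset.mem_filter, Finset.mem_univ, true_and, Finset.mem_insert]
    constructor
    · intro hw
      rcases Nat.lt_succ_iff_lt_or_eq.1 hw with h | h
      · exact Or.inr h
      · exact Or.inl (e.injective (Fin.ext h))
    · rintro (rfl | h)
      · exact Nat.lt_succ_self _
      · exact Nat.lt_succ_of_lt h
  have hd0 : ∀ v, 0 ≤ d v := by
    intro v
    rw [hd]
    refine sub_nonneg.2 (hmono _ _ ?_)
    rw [hPsucc]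
    exact Finset.subset_insert _ _
  -- main inequality by induction
  have main : ∀ (i : ℕ) (U : Finset V),
      ∑ v ∈ U.filter (fun v => (e v : ℕ) < i), d v ≤ f (U ∩ P i) := by
    intro i
    induction i with
    | zero =>
      intro U
      have h1 : U.filter (fun v => (e v : ℕ) < 0) = ∅ := by
        ext v; simp
      rw [h1, hP0, Finset.inter_empty, hempty, Finset.sum_empty]
    | succ i ih =>
      intro U
      by_cases hi : i < n
      · set v0 := e.symm ⟨i, hi⟩ with hv0
        have hev0 : (e v0 : ℕ) = i := by rw [hv0]; simp
        have hfi : ∀ v, ((e v : ℕ) < i + 1 ↔ v = v0 ∨ (e v : ℕ) < i) := by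
          intro v
          rw [Nat.lt_succ_iff_lt_or_eq]
          constructor
          · rintro (h | h)
            · exact Or.inr h
            · exact Or.inl (e.injective (Fin.ext (by rw [h, hev0])))
          · rintro (rfl | h)
            · exact Or.inr hev0
            · exact Or.inl h
        by_cases hU : v0 ∈ U
        · have hfilter : U.filter (fun v => (e v : ℕ) < i + 1)
              = insert v0 (U.filter (fun v => (e v : ℕ) < i)) := by
            ext v
            simp only [Finset.mem_filter, Finset.mem_insert]
            constructor
            · rintro ⟨hv, hlt⟩
              rcases (hfi v).1 hlt with rfl | h
              · exact Or.inl rfl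
              · exact Or.inr ⟨hv, h⟩
            · rintro (rfl | ⟨hv, h⟩)
              · exact ⟨hU, (hfi v0).2 (Or.inl rfl)⟩
              · exact ⟨hv, Nat.lt_succ_of_lt h⟩
          have hnotmem : v0 ∉ U.filter (fun v => (e v : ℕ) < i) := by
            simp [Finset.mem_filter, hev0]
          have hUP : U ∩ P (i + 1) = insert v0 (U ∩ P i) := by
            ext v
            simp only [Finset.mem_inter, Finset.mem_insert, hP, Finset.mem_filter,
              Finset.mem_univ, true_and]
            constructor
            · rintro ⟨hv, hlt⟩
              rcases (hfi v).1 hlt with rfl | h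
              · exact Or.inl rfl
              · exact Or.inr ⟨hv, h⟩
            · rintro (rfl | ⟨hv, h⟩)
              · exact ⟨hU, (hfi v0).2 (Or.inl rfl)⟩
              · exact ⟨hv, Nat.lt_succ_of_lt h⟩
          rw [hfilter, Finset.sum_insert hnotmem, hUP]
          -- submodularity step
          have hs := hsub (insert v0 (U ∩ P i)) (P i)
          have h1 : insert v0 (U ∩ P i) ∪ P i = P (i + 1) := by
            have := hPsucc v0
            rw [hev0] at this
            rw [this]
            ext v
            simp only [Finset.mem_union, Finset.mem_insert, Finset.mem_inter]
            tauto
          have h2 : insert v0 (U ∩ P i) ∩ P i = U ∩ P i := by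
            have hv0P : v0 ∉ P i := by
              have := hvP v0
              rwa [hev0] at this
            ext v
            simp only [Finset.mem_inter, Finset.mem_insert]
            constructor
            · rintro ⟨rfl | ⟨hv, hP'⟩, hPi⟩
              · exact absurd hPi hv0P
              · exact ⟨hv, hP'⟩
            · rintro ⟨hv, hPi⟩
              exact ⟨Or.inr ⟨hv, hPi⟩, hPi⟩
          rw [h1, h2] at hs
          have hdv0 : d v0 = f (P (i + 1)) - f (P i) := by
            simp only [hd]; rw [hev0]
          have := ih U
          linarith
        · have hfilter : U.filter (fun v => (e v : ℕ) < i + 1)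
              = U.filter (fun v => (e v : ℕ) < i) := by
            ext v
            simp only [Finset.mem_filter]
            constructor
            · rintro ⟨hv, hlt⟩
              rcases (hfi v).1 hlt with rfl | h
              · exact absurd hv hU
              · exact ⟨hv, h⟩
            · rintro ⟨hv, h⟩
              exact ⟨hv, Nat.lt_succ_of_lt h⟩
          have hUP : U ∩ P (i + 1) = U ∩ P i := by
            ext v
            simp only [Finset.mem_inter, hP, Finset.mem_filter, Finset.mem_univ, true_and]
            constructor
            · rintro ⟨hv, hlt⟩
              rcases (hfi v).1 hlt with rfl | h
              · exact absurd hv hU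
              · exact ⟨hv, h⟩
            · rintro ⟨hv, h⟩
              exact ⟨hv, Nat.lt_succ_of_lt h⟩
          rw [hfilter, hUP]
          exact ih U
      · -- i ≥ n : nothing changes
        have hall : ∀ v : V, (e v : ℕ) < i := fun v =>
          lt_of_lt_of_le (e v).isLt (Nat.le_of_not_lt hi)
        have hfilter : U.filter (fun v => (e v : ℕ) < i + 1)
            = U.filter (fun v => (e v : ℕ) < i) := by
          ext v
          simp only [Finset.mem_filter]
          exact ⟨fun ⟨hv, _⟩ => ⟨hv, hall v⟩, fun ⟨hv, _⟩ => ⟨hv, Nat.lt_succ_of_lt (hall v)⟩⟩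
        have hUP : P (i + 1) = P i := by
          ext v
          simp only [hP, Finset.mem_filter, Finset.mem_univ, true_and]
          exact ⟨fun _ => hall v, fun _ => Nat.lt_succ_of_lt (hall v)⟩
        rw [hfilter, hUP]
        exact ih U
  -- telescoping equality for univ
  have tele : ∀ i : ℕ, i ≤ n → f (P i) = ∑ v ∈ univ.filter (fun v => (e v : ℕ) < i), d v := by
    intro i
    induction i with
    | zero => intro _; simp [hP0, hempty]
    | succ i ih =>
      intro hin
      have hi : i < n := hin
      set v0 := e.symm ⟨i, hi⟩ with hv0
      have hev0 : (e v0 : ℕ) = i := by rw [hv0]; simp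
      have hPs : P (i + 1) = insert v0 (P i) := by
        have := hPsucc v0
        rwa [hev0] at this
      have hv0P : v0 ∉ P i := by
        have := hvP v0
        rwa [hev0] at this
      have hfilter : univ.filter (fun v => (e v : ℕ) < i + 1)
          = insert v0 (univ.filter (fun v => (e v : ℕ) < i)) := by
        ext v
        simp only [Finset.mem_filter, Finset.mem_univ, true_and, Finset.mem_insert]
        constructor
        · intro hlt
          rcases Nat.lt_succ_iff_lt_or_eq.1 hlt with h | h
          · exact Or.inr h
          · exact Or.inl (e.injective (Fin.ext (by rw [h, hev0])))
        · rintro (rfl | h)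
          · rw [hev0]; exact Nat.lt_succ_self _
          · exact Nat.lt_succ_of_lt h
      have hnm : v0 ∉ univ.filter (fun v => (e v : ℕ) < i) := by
        simp [hev0]
      rw [hfilter, Finset.sum_insert hnm, ← ih (le_of_lt hi)]
      have hdv0 : d v0 = f (P (i + 1)) - f (P i) := by simp only [hd]; rw [hev0]
      linarith
  have htot : f univ = ∑ v, d v := by
    have h1 := tele n le_rfl
    have h2 : univ.filter (fun v : V => (e v : ℕ) < n) = univ := by
      ext v; simp [(e v).isLt, hn]
    rw [hPn, h2] at h1
    exact h1
  -- final computation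
  set lam := Finset.univ.inf' Finset.univ_nonempty
      (fun v : V => ∑ U ∈ Finset.univ.filter (fun U : Finset V => v ∈ U), α U) with hlam
  have hlam_le : ∀ v : V, lam ≤ ∑ U ∈ Finset.univ.filter (fun U : Finset V => v ∈ U), α U :=
    fun v => Finset.inf'_le _ (Finset.mem_univ v)
  calc lam * f univ = ∑ v, lam * d v := by rw [htot, Finset.mul_sum]
    _ ≤ ∑ v, (∑ U ∈ Finset.univ.filter (fun U : Finset V => v ∈ U), α U) * d v :=
        Finset.sum_le_sum fun v _ => mul_le_mul_of_nonneg_right (hlam_le v) (hd0 v)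
    _ = ∑ v, ∑ U : Finset V, (if v ∈ U then α U * d v else 0) := by
        refine Finset.sum_congr rfl fun v _ => ?_
        rw [Finset.sum_mul, Finset.sum_filter]
    _ = ∑ U : Finset V, ∑ v, (if v ∈ U then α U * d v else 0) := Finset.sum_comm
    _ = ∑ U : Finset V, α U * ∑ v ∈ U, d v := by
        refine Finset.sum_congr rfl fun U _ => ?_
        rw [Finset.mul_sum, Finset.sum_ite_mem, Finset.univ_inter]
    _ ≤ ∑ U : Finset V, α U * f U := by
        refine Finset.sum_le_sum fun U _ => mul_le_mul_of_nonneg_left ?_ (hα U)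
        have := main n U
        have h2 : U.filter (fun v => (e v : ℕ) < n) = U := by
          ext v; simp [(e v).isLt, hn]
        rwa [h2, hPn, Finset.inter_univ] at this

end Abstract

end ShearerAux

/-- Weighted Shearer inequality:
`∑_{U ⊆ V} α_U · H(X_U) ≥ λ · H(X_V)` where `λ = min_v ∑_{U ∋ v} α_U`. -/
theorem stmt1 {Ω : Type*} [MeasurableSpace Ω] (μ : Measure Ω) [IsProbabilityMeasure μ]
    {V : Type*} [Fintype V] [DecidableEq V] [Nonempty V]
    {S : Type*} [Fintype S] [MeasurableSpace S] [MeasurableSingletonClass S]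
    (X : V → Ω → S) (hX : ∀ v, Measurable (X v))
    (α : Finset V → ℝ) (hα : ∀ U, 0 ≤ α U) :
    ∑ U : Finset V, α U * entropy μ (fun ω => fun v : U => X v ω) ≥
      (Finset.univ.inf' Finset.univ_nonempty
          (fun v : V => ∑ U ∈ Finset.univ.filter (fun U : Finset V => v ∈ U), α U)) *
        entropy μ (fun ω => fun v : V => X v ω) := by
  classical
  have hmeas : ∀ U : Finset V, Measurable (fun ω => fun v : U => X v ω) :=
    fun U => measurable_pi_lambda _ (fun v => hX v)
  have hempty : entropy μ (fun ω => fun v : ((∅ : Finset V) : Finset V) => X v ω) = 0 := by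
    apply Finset.sum_eq_zero
    intro s _
    have hpre : (fun ω => fun v : ((∅ : Finset V) : Finset V) => X v ω) ⁻¹' {s} = Set.univ := by
      apply Set.eq_univ_of_forall
      intro ω
      simp only [Set.mem_preimage, Set.mem_singleton_iff]
      funext v
      exact absurd v.2 (Finset.notMem_empty _)
    rw [hpre]
    simp
  have hmono : ∀ A B : Finset V, A ⊆ B →
      entropy μ (fun ω => fun v : A => X v ω) ≤ entropy μ (fun ω => fun v : B => X v ω) := by
    intro A B hAB
    have h : entropy μ (fun ω => fun v : A => X v ω)
        = entropy μ ((fun (t : {x // x ∈ B} → S) (v : {x // x ∈ A}) => t ⟨v.1, hAB v.2⟩)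
            ∘ (fun ω => fun v : B => X v ω)) := rfl
    rw [h]
    exact ShearerAux.entropy_comp_le μ _ (hmeas B) _
  have hsub : ∀ A B : Finset V,
      entropy μ (fun ω => fun v : (A ∪ B : Finset V) => X v ω)
        + entropy μ (fun ω => fun v : (A ∩ B : Finset V) => X v ω)
      ≤ entropy μ (fun ω => fun v : A => X v ω) + entropy μ (fun ω => fun v : B => X v ω) := by
    intro A B
    have key := ShearerAux.entropy_submodular μ
      (Z := fun ω => fun v : (A ∪ B : Finset V) => X v ω)
      (hmeas (A ∪ B))
      (f := fun (t : {x // x ∈ A ∪ B} → S) (v : {x // x ∈ A}) =>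
        t ⟨v.1, Finset.mem_union_left B v.2⟩)
      (g := fun (t : {x // x ∈ A ∪ B} → S) (v : {x // x ∈ B}) =>
        t ⟨v.1, Finset.mem_union_right A v.2⟩)
      (rA := fun (t : {x // x ∈ A} → S) (v : {x // x ∈ A ∩ B}) =>
        t ⟨v.1, (Finset.mem_inter.1 v.2).1⟩)
      (rB := fun (t : {x // x ∈ B} → S) (v : {x // x ∈ A ∩ B}) =>
        t ⟨v.1, (Finset.mem_inter.1 v.2).2⟩)
      (hinj := ?_) (hcomm := ?_)
    · exact key
    · intro t₁ t₂ h
      have h1 := congrArg Prod.fst h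
      have h2 := congrArg Prod.snd h
      simp only at h1 h2
      funext v
      rcases Finset.mem_union.1 v.2 with hv | hv
      · exact congrFun h1 ⟨v.1, hv⟩
      · exact congrFun h2 ⟨v.1, hv⟩
    · intro t
      rfl
  have huniv : entropy μ (fun ω => fun v : ((Finset.univ : Finset V) : Finset V) => X v ω)
      = entropy μ (fun ω => fun v : V => X v ω) := by
    apply le_antisymm
    · have h : entropy μ (fun ω => fun v : ((Finset.univ : Finset V) : Finset V) => X v ω)
          = entropy μ ((fun (t : V → S) (v : {x // x ∈ (Finset.univ : Finset V)}) => t v.1)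
              ∘ (fun ω => fun v : V => X v ω)) := rfl
      rw [h]
      exact ShearerAux.entropy_comp_le μ _ (measurable_pi_lambda _ hX) _
    · have h : entropy μ (fun ω => fun v : V => X v ω)
          = entropy μ ((fun (t : {x // x ∈ (Finset.univ : Finset V)} → S) (v : V) =>
              t ⟨v, Finset.mem_univ v⟩)
              ∘ (fun ω => fun v : ((Finset.univ : Finset V) : Finset V) => X v ω)) := rfl
      rw [h]
      exact ShearerAux.entropy_comp_le μ _ (hmeas Finset.univ) _
  have main := ShearerAux.shearer_abstract (V := V)
    (fun U => entropy μ (fun ω => fun v : U => X v ω)) hempty hmono hsub α hα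
  beta_reduce at main
  rw [huniv] at main
  exact main
end

section
/- Let V be a finite set, α : P(V) → [0,∞) a weight function on subsets of V, and f : V → [0,∞). Then ∑_{U ⊆ V} α_U · max_{v ∈ U} f(v) ≥ β · ∑_{v ∈ V} f(v), where β = min over nonempty W ⊆ supp(f) of (∑_{U : U ∩ W ≠ ∅} α_U) / |W|. (Equivalently, the ratio (∑_U α_U max_{v∈U} f(v)) / (∑_v f(v)) over nonnegative functions f with fixed support is minimized by an indicator function of a subset of the support.) -/
open Finset

/-- `Mx U g` is `max_{v ∈ U} g(v)` with the convention that the max over `∅` is `0`. -/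
private def Mx {V : Type*} (U : Finset V) (g : V → ℝ) : ℝ :=
  if h : U.Nonempty then U.sup' h g else 0

private lemma Mx_zero_on {V : Type*} (U : Finset V) (g : V → ℝ)
    (h : ∀ v ∈ U, g v = 0) : Mx U g = 0 := by
  unfold Mx
  split_ifs with hU
  · rw [Finset.sup'_congr hU rfl h]
    simp
  · rfl

/-- If `g` is nonnegative, vanishes outside `sf`, and `U ∩ sf` is nonempty, then the
max of `g` over `U` equals the max over `U ∩ sf`. -/
private lemma sup'_inter {V : Type*} [DecidableEq V] (U sf : Finset V) (g : V → ℝ)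
    (hg : ∀ v, 0 ≤ g v) (hout : ∀ v ∉ sf, g v = 0)
    (h : (U ∩ sf).Nonempty) (hU : U.Nonempty) :
    U.sup' hU g = (U ∩ sf).sup' h g := by
  apply le_antisymm
  · apply Finset.sup'_le
    intro v hv
    by_cases hvs : v ∈ sf
    · exact Finset.le_sup' g (Finset.mem_inter.mpr ⟨hv, hvs⟩)
    · rw [hout v hvs]
      obtain ⟨w, hw⟩ := h
      exact (hg w).trans (Finset.le_sup' g hw)
  · exact Finset.sup'_mono g Finset.inter_subset_left h

private lemma aux {V : Type*} [Fintype V] [DecidableEq V]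
    (α : Finset V → ℝ) (hα : ∀ U, 0 ≤ α U)
    (supp : Finset V) (β : ℝ)
    (hβ : β = sInf ((fun W : Finset V =>
        (∑ U ∈ Finset.univ.filter (fun U : Finset V => (U ∩ W).Nonempty), α U) / W.card) ''
      {W : Finset V | W.Nonempty ∧ W ⊆ supp})) :
    ∀ n : ℕ, ∀ f : V → ℝ, (∀ v, 0 ≤ f v) →
      (Finset.univ.filter fun v => 0 < f v) ⊆ supp →
      (Finset.univ.filter fun v => 0 < f v).card ≤ n →
      β * ∑ v, f v ≤ ∑ U : Finset V, α U * Mx U f := by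
  have hbdd : BddBelow ((fun W : Finset V =>
      (∑ U ∈ Finset.univ.filter (fun U : Finset V => (U ∩ W).Nonempty), α U) / W.card) ''
      {W : Finset V | W.Nonempty ∧ W ⊆ supp}) := by
    refine ⟨0, ?_⟩
    rintro x ⟨W, hW, rfl⟩
    exact div_nonneg (Finset.sum_nonneg fun U _ => hα U) (Nat.cast_nonneg _)
  have zero_case : ∀ f : V → ℝ, (∀ v, f v = 0) →
      β * ∑ v, f v ≤ ∑ U : Finset V, α U * Mx U f := by
    intro f hf0
    have h2 : ∀ U : Finset V, Mx U f = 0 := fun U => Mx_zero_on U f fun v _ => hf0 v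
    simp [hf0, h2]
  intro n
  induction n with
  | zero =>
    intro f hf hsub hcard
    have hempty : (Finset.univ.filter fun v => 0 < f v) = ∅ :=
      Finset.card_eq_zero.mp (Nat.le_zero.mp hcard)
    refine zero_case f fun v => ?_
    by_contra hv
    have : v ∈ (Finset.univ.filter fun v => 0 < f v) := by
      simp [lt_of_le_of_ne (hf v) (Ne.symm hv)]
    simp [hempty] at this
  | succ n ih =>
    intro f hf hsub hcard
    set sf := (Finset.univ.filter fun v => 0 < f v) with hsf
    by_cases hne' : sf.Nonempty
    swap
    · refine zero_case f fun v => ?_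
      by_contra hv
      exact hne' ⟨v, Finset.mem_filter.mpr ⟨Finset.mem_univ v,
        lt_of_le_of_ne (hf v) (Ne.symm hv)⟩⟩
    -- peel off the minimum positive value m
    set m := sf.inf' hne' f with hm
    obtain ⟨v0, hv0, hv0m⟩ := Finset.exists_mem_eq_inf' hne' f
    have hmpos : 0 < m := by
      rw [hm, hv0m]
      exact (Finset.mem_filter.mp hv0).2
    have hmle : ∀ v ∈ sf, m ≤ f v := fun v hv => Finset.inf'_le f hv
    have hfout : ∀ v ∉ sf, f v = 0 := by
      intro v hv
      by_contra h
      exact hv (Finset.mem_filter.mpr ⟨Finset.mem_univ v,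
        lt_of_le_of_ne (hf v) (Ne.symm h)⟩)
    set f' : V → ℝ := fun v => if v ∈ sf then f v - m else 0 with hf'
    have hf'nn : ∀ v, 0 ≤ f' v := by
      intro v
      simp only [hf']
      split_ifs with h
      · linarith [hmle v h]
      · exact le_refl 0
    have hf'out : ∀ v ∉ sf, f' v = 0 := by
      intro v hv; simp [hf', hv]
    -- support of f' is contained in sf.erase v0
    have hsub' : (Finset.univ.filter fun v => 0 < f' v) ⊆ sf.erase v0 := by
      intro v hv
      have hv' := (Finset.mem_filter.mp hv).2
      by_cases hvs : v ∈ sf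
      · refine Finset.mem_erase.mpr ⟨?_, hvs⟩
        intro hveq
        subst hveq
        simp only [hf', if_pos hvs] at hv'
        have hmv : m = f v := hm.trans hv0m
        linarith
      · simp [hf', hvs] at hv'
    -- pointwise decomposition
    have hpt : ∀ v, f v = f' v + (if v ∈ sf then m else 0) := by
      intro v
      by_cases hvs : v ∈ sf
      · simp [hf', hvs]
      · simp [hf', hvs, hfout v hvs]
    have hsum : ∑ v, f v = (∑ v, f' v) + m * sf.card := by
      rw [Finset.sum_congr rfl fun v _ => hpt v, Finset.sum_add_distrib]
      congr 1
      rw [Finset.sum_ite_mem, Finset.univ_inter, Finset.sum_const, nsmul_eq_mul, mul_comm]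
    -- decomposition of the max
    have hMx : ∀ U : Finset V,
        Mx U f = Mx U f' + (if (U ∩ sf).Nonempty then m else 0) := by
      intro U
      by_cases hUs : (U ∩ sf).Nonempty
      · have hU : U.Nonempty := by
          obtain ⟨w, hw⟩ := hUs
          exact ⟨w, (Finset.mem_inter.mp hw).1⟩
        rw [if_pos hUs]
        unfold Mx
        rw [dif_pos hU, dif_pos hU,
          sup'_inter U sf f hf hfout hUs hU,
          sup'_inter U sf f' hf'nn hf'out hUs hU]
        have hcongr : (U ∩ sf).sup' hUs f = (U ∩ sf).sup' hUs (fun v => f' v + m) := by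
          refine Finset.sup'_congr hUs rfl fun v hv => ?_
          have hvs : v ∈ sf := (Finset.mem_inter.mp hv).2
          simp [hf', hvs]
        rw [hcongr]
        have := Finset.comp_sup'_eq_sup'_comp (s := U ∩ sf) hUs (f := f')
          (g := fun x : ℝ => x + m) (fun x y => by simp [max_add_add_right])
        simpa [Function.comp] using this.symm
      · rw [if_neg hUs, add_zero]
        have hz : ∀ g : V → ℝ, (∀ v ∉ sf, g v = 0) → Mx U g = 0 := by
          intro g hg
          refine Mx_zero_on U g fun v hv => hg v fun hvs => ?_
          exact hUs ⟨v, Finset.mem_inter.mpr ⟨hv, hvs⟩⟩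
        rw [hz f hfout, hz f' hf'out]
    -- sum decomposition on the α side
    have hsumα : ∑ U : Finset V, α U * Mx U f
        = (∑ U : Finset V, α U * Mx U f')
          + m * ∑ U ∈ Finset.univ.filter (fun U : Finset V => (U ∩ sf).Nonempty), α U := by
      rw [Finset.sum_congr rfl fun U _ => by rw [hMx U, mul_add], Finset.sum_add_distrib]
      congr 1
      rw [Finset.mul_sum, Finset.sum_filter]
      refine Finset.sum_congr rfl fun U _ => ?_
      by_cases hUs : (U ∩ sf).Nonempty <;> simp [hUs, mul_comm]
    -- β bound for sf
    have hβle : β * sf.card ≤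
        ∑ U ∈ Finset.univ.filter (fun U : Finset V => (U ∩ sf).Nonempty), α U := by
      have hmem : (∑ U ∈ Finset.univ.filter (fun U : Finset V => (U ∩ sf).Nonempty), α U)
          / sf.card ∈ ((fun W : Finset V =>
          (∑ U ∈ Finset.univ.filter (fun U : Finset V => (U ∩ W).Nonempty), α U) / W.card) ''
          {W : Finset V | W.Nonempty ∧ W ⊆ supp}) := ⟨sf, ⟨hne', hsub⟩, rfl⟩
      have hle : β ≤ (∑ U ∈ Finset.univ.filter
          (fun U : Finset V => (U ∩ sf).Nonempty), α U) / sf.card := by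
        rw [hβ]; exact csInf_le hbdd hmem
      have hcpos : (0 : ℝ) < sf.card := by
        exact_mod_cast Finset.card_pos.mpr hne'
      exact (le_div_iff₀ hcpos).mp hle
    -- induction hypothesis applied to f'
    have hIH : β * ∑ v, f' v ≤ ∑ U : Finset V, α U * Mx U f' := by
      refine ih f' hf'nn (hsub'.trans ((Finset.erase_subset _ _).trans hsub)) ?_
      calc (Finset.univ.filter fun v => 0 < f' v).card
          ≤ (sf.erase v0).card := Finset.card_le_card hsub'
        _ = sf.card - 1 := Finset.card_erase_of_mem hv0
        _ ≤ n := by omega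
    -- combine
    rw [hsum, hsumα, mul_add]
    have : β * (m * sf.card) ≤ m * ∑ U ∈ Finset.univ.filter
        (fun U : Finset V => (U ∩ sf).Nonempty), α U := by
      calc β * (m * sf.card) = m * (β * sf.card) := by ring
        _ ≤ m * _ := mul_le_mul_of_nonneg_left hβle hmpos.le
    linarith

/-- For a weight function `α` on subsets of a finite set `V` and a nonnegative
function `f : V → [0,∞)` with nonempty support,
`∑_{U ⊆ V} α_U · max_{v ∈ U} f(v) ≥ β · ∑_v f(v)`, where
`β = min_{∅ ≠ W ⊆ supp f} (∑_{U : U ∩ W ≠ ∅} α_U) / |W|`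
(the maximum over the empty set is taken to be `0`). -/
theorem stmt2 {V : Type*} [Fintype V] [DecidableEq V]
    (α : Finset V → ℝ) (hα : ∀ U, 0 ≤ α U)
    (f : V → ℝ) (hf : ∀ v, 0 ≤ f v)
    (supp : Finset V) (hsupp : supp = Finset.univ.filter fun v => 0 < f v)
    (hne : supp.Nonempty)
    (β : ℝ)
    (hβ : β = sInf ((fun W : Finset V =>
        (∑ U ∈ Finset.univ.filter (fun U : Finset V => (U ∩ W).Nonempty), α U) / W.card) ''
      {W : Finset V | W.Nonempty ∧ W ⊆ supp})) :
    ∑ U : Finset V, α U * (if h : U.Nonempty then U.sup' h f else 0) ≥ β * ∑ v, f v := by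
  have := aux α hα supp β hβ (Finset.univ.filter fun v => 0 < f v).card f hf
    (by rw [hsupp]) le_rfl
  simpa [Mx, ge_iff_le] using this
end

section
/- Finite entropy inequality (hypergraph version): Let V be a finite set, E a collection of subsets (hyperedges) of V, Z_1,...,Z_m independent random variables with associated subsets W_i ⊆ V, and for each v ∈ V let X_v be a measurable function of (Z_i : v ∈ W_i), taking finitely many values. Then ∑_{e ∈ E} H(X_e) ≥ β · ∑_{v ∈ V} H(X_v), where β = min over 1 ≤ i ≤ m and nonempty W ⊆ W_i of |{e ∈ E : e ∩ W ≠ ∅}| / |W|. -/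
open MeasureTheory ProbabilityTheory Real
open scoped ENNReal NNReal

namespace Stmt5

/-- Pointwise Gibbs-type inequality. -/
lemma gibbs_pt {T U : Type*} [Fintype T] [Fintype U] [DecidableEq U] (h : T → U)
    (p P : T → ℝ) (hp : ∀ t, 0 ≤ p t) (hP : ∀ t, 0 ≤ P t)
    (hps : ∑ t, p t = 1) (hPs : ∑ t, P t = 1)
    (hvan : ∀ t, P t = 0 → p t = 0) :
    ∑ u : U, ((∑ t ∈ Finset.univ.filter fun t => h t = u, p t) *
        Real.log (∑ t ∈ Finset.univ.filter fun t => h t = u, p t) -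
      (∑ t ∈ Finset.univ.filter fun t => h t = u, p t) *
        Real.log (∑ t ∈ Finset.univ.filter fun t => h t = u, P t)) ≤
    ∑ t : T, (p t * Real.log (p t) - p t * Real.log (P t)) := by
  classical
  set q : U → ℝ := fun u => ∑ t ∈ Finset.univ.filter fun t => h t = u, p t with hq
  set Q : U → ℝ := fun u => ∑ t ∈ Finset.univ.filter fun t => h t = u, P t with hQ
  have hq0 : ∀ u, 0 ≤ q u := fun u => Finset.sum_nonneg fun t _ => hp t
  have hQ0 : ∀ u, 0 ≤ Q u := fun u => Finset.sum_nonneg fun t _ => hP t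
  have hmem : ∀ t : T, t ∈ Finset.univ.filter fun t' => h t' = h t := by
    intro t; simp
  have hpq : ∀ t, p t ≤ q (h t) := fun t =>
    Finset.single_le_sum (fun t' _ => hp t') (hmem t)
  have hPQ : ∀ t, P t ≤ Q (h t) := fun t =>
    Finset.single_le_sum (fun t' _ => hP t') (hmem t)
  set r : T → ℝ := fun t => if Q (h t) = 0 then 0 else P t * q (h t) / Q (h t) with hr
  have hr0 : ∀ t, 0 ≤ r t := by
    intro t; rw [hr]; dsimp only
    split
    · exact le_refl 0
    · exact div_nonneg (mul_nonneg (hP t) (hq0 (h t))) (hQ0 (h t))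
  have hrpos : ∀ t, 0 < p t → 0 < r t := by
    intro t hpt
    have hPt : 0 < P t := by
      rcases lt_or_eq_of_le (hP t) with h' | h'
      · exact h'
      · exact absurd (hvan t h'.symm) (by linarith)
    have hQt : 0 < Q (h t) := lt_of_lt_of_le hPt (hPQ t)
    have hqt : 0 < q (h t) := lt_of_lt_of_le hpt (hpq t)
    rw [hr]; dsimp only
    rw [if_neg (ne_of_gt hQt)]
    exact div_pos (mul_pos hPt hqt) hQt
  -- fiberwise sums
  have hfiber : ∀ f : T → ℝ, ∑ u : U, ∑ t ∈ Finset.univ.filter fun t => h t = u, f t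
      = ∑ t : T, f t := by
    intro f
    exact Finset.sum_fiberwise_of_maps_to (fun t _ => Finset.mem_univ (h t)) f
  have hsumr : ∑ t, r t ≤ 1 := by
    rw [← hfiber r]
    have : ∀ u : U, (∑ t ∈ Finset.univ.filter fun t => h t = u, r t) ≤ q u := by
      intro u
      by_cases hQu : Q u = 0
      · have : ∀ t ∈ Finset.univ.filter fun t => h t = u, r t = 0 := by
          intro t ht
          have : h t = u := (Finset.mem_filter.mp ht).2
          rw [hr]; dsimp only; rw [this, if_pos hQu]
        rw [Finset.sum_congr rfl this]
        simpa using hq0 u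
      · have : ∀ t ∈ Finset.univ.filter fun t => h t = u, r t = P t * q u / Q u := by
          intro t ht
          have ht' : h t = u := (Finset.mem_filter.mp ht).2
          rw [hr]; dsimp only; rw [ht', if_neg hQu]
        rw [Finset.sum_congr rfl this, ← Finset.sum_div, ← Finset.sum_mul]
        rw [show (∑ t ∈ Finset.univ.filter fun t => h t = u, P t) = Q u from rfl]
        rw [mul_comm, mul_div_assoc, div_self hQu, mul_one]
    calc ∑ u : U, ∑ t ∈ Finset.univ.filter fun t => h t = u, r t
        ≤ ∑ u : U, q u := Finset.sum_le_sum fun u _ => this u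
      _ = ∑ t, p t := hfiber p
      _ = 1 := hps
  -- main Gibbs estimate
  have hmain : ∑ t, (p t * Real.log (r t) - p t * Real.log (p t)) ≤ 0 := by
    have hterm : ∀ t, p t * Real.log (r t) - p t * Real.log (p t) ≤ r t - p t := by
      intro t
      rcases eq_or_lt_of_le (hp t) with h0 | h0
      · rw [← h0]; simpa using hr0 t
      · have hrt := hrpos t h0
        have : Real.log (r t) - Real.log (p t) = Real.log (r t / p t) :=
          (Real.log_div (ne_of_gt hrt) (ne_of_gt h0)).symm
        have hb : Real.log (r t / p t) ≤ r t / p t - 1 :=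
          Real.log_le_sub_one_of_pos (div_pos hrt h0)
        calc p t * Real.log (r t) - p t * Real.log (p t)
            = p t * (Real.log (r t) - Real.log (p t)) := by ring
          _ = p t * Real.log (r t / p t) := by rw [this]
          _ ≤ p t * (r t / p t - 1) := by
              exact mul_le_mul_of_nonneg_left hb (le_of_lt h0)
          _ = r t - p t := by field_simp
    calc ∑ t, (p t * Real.log (r t) - p t * Real.log (p t))
        ≤ ∑ t, (r t - p t) := Finset.sum_le_sum fun t _ => hterm t
      _ = (∑ t, r t) - ∑ t, p t := Finset.sum_sub_distrib _ _
      _ ≤ 1 - 1 := by rw [hps]; linarith [hsumr]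
      _ = 0 := by ring
  -- decomposition of log r
  have hdec : ∑ t, p t * Real.log (r t)
      = ∑ t, p t * Real.log (P t) + ∑ u : U, (q u * Real.log (q u) - q u * Real.log (Q u)) := by
    have hterm : ∀ t, p t * Real.log (r t)
        = p t * Real.log (P t) + p t * (Real.log (q (h t)) - Real.log (Q (h t))) := by
      intro t
      rcases eq_or_lt_of_le (hp t) with h0 | h0
      · rw [← h0]; ring
      · have hPt : 0 < P t := by
          rcases lt_or_eq_of_le (hP t) with h' | h'
          · exact h'
          · exact absurd (hvan t h'.symm) (by linarith)
        have hQt : 0 < Q (h t) := lt_of_lt_of_le hPt (hPQ t)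
        have hqt : 0 < q (h t) := lt_of_lt_of_le h0 (hpq t)
        have : r t = P t * q (h t) / Q (h t) := by
          rw [hr]; dsimp only; rw [if_neg (ne_of_gt hQt)]
        rw [this, Real.log_div (by positivity) (ne_of_gt hQt),
          Real.log_mul (ne_of_gt hPt) (ne_of_gt hqt)]
        ring
    rw [Finset.sum_congr rfl fun t _ => hterm t, Finset.sum_add_distrib]
    congr 1
    rw [← hfiber (fun t => p t * (Real.log (q (h t)) - Real.log (Q (h t))))]
    refine Finset.sum_congr rfl fun u _ => ?_
    have : ∀ t ∈ Finset.univ.filter fun t => h t = u,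
        p t * (Real.log (q (h t)) - Real.log (Q (h t)))
          = p t * (Real.log (q u) - Real.log (Q u)) := by
      intro t ht
      rw [(Finset.mem_filter.mp ht).2]
    rw [Finset.sum_congr rfl this, ← Finset.sum_mul]
    rw [show (∑ t ∈ Finset.univ.filter fun t => h t = u, p t) = q u from rfl]
    ring
  have expand : ∑ u : U, (q u * Real.log (q u) - q u * Real.log (Q u))
      ≤ ∑ t, (p t * Real.log (p t) - p t * Real.log (P t)) := by
    have h1 : ∑ t, (p t * Real.log (r t) - p t * Real.log (p t))
        = ∑ t, p t * Real.log (r t) - ∑ t, p t * Real.log (p t) := Finset.sum_sub_distrib _ _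
    have h2 : ∑ t, (p t * Real.log (p t) - p t * Real.log (P t))
        = ∑ t, p t * Real.log (p t) - ∑ t, p t * Real.log (P t) := Finset.sum_sub_distrib _ _
    linarith [hmain, hdec]
  exact expand


lemma comb_aux {V : Type*} [Fintype V] [DecidableEq V] (E' : Finset (Finset V)) (Wm : Finset V)
    (β : ℝ) (hβ0 : 0 ≤ β)
    (hβ : ∀ Wsub : Finset V, Wsub.Nonempty → Wsub ⊆ Wm →
      β * Wsub.card ≤ ((E'.filter fun e => (e ∩ Wsub).Nonempty).card : ℝ)) :
    ∀ (n : ℕ) (a : Finset V → ℝ) (b : V → ℝ),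
      (Wm.filter fun v => 0 < b v).card ≤ n →
      (∀ e ∈ E', 0 ≤ a e) → (∀ v, 0 ≤ b v) → (∀ v, v ∉ Wm → b v = 0) →
      (∀ e ∈ E', ∀ v ∈ e, v ∈ Wm → b v ≤ a e) →
      β * ∑ v, b v ≤ ∑ e ∈ E', a e := by
  intro n
  induction n with
  | zero =>
    intro a b hcard ha0 hb0 hbW hab
    have hb : ∀ v, b v = 0 := by
      intro v
      by_cases hv : v ∈ Wm
      · by_contra hne
        have : 0 < b v := lt_of_le_of_ne (hb0 v) (Ne.symm hne)
        have : v ∈ Wm.filter fun v => 0 < b v := Finset.mem_filter.mpr ⟨hv, this⟩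
        have := Finset.card_pos.mpr ⟨v, this⟩
        omega
      · exact hbW v hv
    simp only [hb, Finset.sum_const_zero, mul_zero]
    exact Finset.sum_nonneg ha0
  | succ n ih =>
    intro a b hcard ha0 hb0 hbW hab
    set Wb := Wm.filter fun v => 0 < b v with hWb
    by_cases hne : Wb.Nonempty
    · obtain ⟨v0, hv0, hmin⟩ := Finset.exists_min_image Wb b hne
      set c := b v0 with hc
      have hcpos : 0 < c := (Finset.mem_filter.mp hv0).2
      have hWbWm : Wb ⊆ Wm := Finset.filter_subset _ _
      have hble : ∀ v ∈ Wb, c ≤ b v := fun v hv => hmin v hv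
      set b' : V → ℝ := fun v => if v ∈ Wb then b v - c else 0 with hb'
      set a' : Finset V → ℝ := fun e => if (e ∩ Wb).Nonempty then a e - c else a e with ha'
      have hb'0 : ∀ v, 0 ≤ b' v := by
        intro v; rw [hb']; dsimp only; split
        · linarith [hble v (by assumption)]
        · exact le_refl 0
      have hb'W : ∀ v, v ∉ Wm → b' v = 0 := by
        intro v hv; rw [hb']; dsimp only
        rw [if_neg (fun hvb => hv (hWbWm hvb))]
      have hca : ∀ e ∈ E', (e ∩ Wb).Nonempty → c ≤ a e := by
        intro e he ⟨v, hv⟩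
        have hv' := Finset.mem_inter.mp hv
        exact le_trans (hble v hv'.2) (hab e he v hv'.1 (hWbWm hv'.2))
      have ha'0 : ∀ e ∈ E', 0 ≤ a' e := by
        intro e he; rw [ha']; dsimp only; split
        · linarith [hca e he (by assumption)]
        · exact ha0 e he
      have hab' : ∀ e ∈ E', ∀ v ∈ e, v ∈ Wm → b' v ≤ a' e := by
        intro e he v hv hvm
        by_cases hvb : v ∈ Wb
        · have : (e ∩ Wb).Nonempty := ⟨v, Finset.mem_inter.mpr ⟨hv, hvb⟩⟩
          rw [hb', ha']; dsimp only; rw [if_pos hvb, if_pos this]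
          linarith [hab e he v hv hvm]
        · rw [hb']; dsimp only; rw [if_neg hvb]
          exact ha'0 e he
      have hcard' : (Wm.filter fun v => 0 < b' v).card ≤ n := by
        have hsub : (Wm.filter fun v => 0 < b' v) ⊆ Wb.erase v0 := by
          intro v hv
          obtain ⟨hvm, hvpos⟩ := Finset.mem_filter.mp hv
          have hvb : v ∈ Wb := by
            by_contra hvb
            rw [hb'] at hvpos; dsimp only at hvpos; rw [if_neg hvb] at hvpos
            exact lt_irrefl 0 hvpos
          refine Finset.mem_erase.mpr ⟨?_, hvb⟩
          intro heq
          rw [hb'] at hvpos; dsimp only at hvpos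
          rw [if_pos hvb, heq] at hvpos
          simp [← hc] at hvpos
        have := Finset.card_le_card hsub
        have h2 : (Wb.erase v0).card = Wb.card - 1 := Finset.card_erase_of_mem hv0
        omega
      have hIH := ih a' b' hcard' ha'0 hb'0 hb'W hab'
      -- reassemble
      have hbsplit : ∀ v, b v = b' v + (if v ∈ Wb then c else 0) := by
        intro v
        rw [hb']; dsimp only
        by_cases hvb : v ∈ Wb
        · rw [if_pos hvb, if_pos hvb]; ring
        · rw [if_neg hvb, if_neg hvb]
          by_cases hvm : v ∈ Wm
          · have : ¬ 0 < b v := fun hlt => hvb (Finset.mem_filter.mpr ⟨hvm, hlt⟩)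
            linarith [hb0 v, le_of_not_gt this]
          · rw [hbW v hvm]; ring
      have hasplit : ∀ e, a e = a' e + (if (e ∩ Wb).Nonempty then c else 0) := by
        intro e
        rw [ha']; dsimp only
        by_cases he : (e ∩ Wb).Nonempty
        · rw [if_pos he, if_pos he]; ring
        · rw [if_neg he, if_neg he]; ring
      have hsumb : ∑ v, b v = (∑ v, b' v) + c * Wb.card := by
        rw [Finset.sum_congr rfl fun v _ => hbsplit v, Finset.sum_add_distrib]
        congr 1
        rw [Finset.sum_ite_mem, Finset.univ_inter, Finset.sum_const, nsmul_eq_mul, mul_comm]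
      have hsuma : ∑ e ∈ E', a e = (∑ e ∈ E', a' e)
          + c * ((E'.filter fun e => (e ∩ Wb).Nonempty).card : ℝ) := by
        rw [Finset.sum_congr rfl fun e _ => hasplit e, Finset.sum_add_distrib]
        congr 1
        rw [← Finset.sum_filter, Finset.sum_const, nsmul_eq_mul, mul_comm]
      have hβW := hβ Wb hne hWbWm
      have : c * (β * Wb.card) ≤ c * ((E'.filter fun e => (e ∩ Wb).Nonempty).card : ℝ) :=
        mul_le_mul_of_nonneg_left hβW hcpos.le
      calc β * ∑ v, b v = β * ∑ v, b' v + c * (β * Wb.card) := by rw [hsumb]; ring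
        _ ≤ (∑ e ∈ E', a' e) + c * ((E'.filter fun e => (e ∩ Wb).Nonempty).card : ℝ) := by
            linarith [hIH]
        _ = ∑ e ∈ E', a e := hsuma.symm
    · have hb : ∀ v, b v = 0 := by
        intro v
        by_cases hv : v ∈ Wm
        · by_contra hne'
          exact hne ⟨v, Finset.mem_filter.mpr ⟨hv, lt_of_le_of_ne (hb0 v) (Ne.symm hne')⟩⟩
        · exact hbW v hv
      simp only [hb, Finset.sum_const_zero, mul_zero]
      exact Finset.sum_nonneg ha0


lemma negMulLog_le_one {x : ℝ} (h1 : 0 ≤ x) (h2 : x ≤ 1) : Real.negMulLog x ≤ 1 := by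
  rcases eq_or_lt_of_le h1 with h0 | h0
  · simp [← h0, Real.negMulLog]
  · have hinv : 0 < x⁻¹ := inv_pos.mpr h0
    have := Real.log_le_sub_one_of_pos hinv
    rw [Real.log_inv] at this
    have : -Real.log x ≤ x⁻¹ := by linarith
    calc Real.negMulLog x = x * (-Real.log x) := by rw [Real.negMulLog]; ring
      _ ≤ x * x⁻¹ := mul_le_mul_of_nonneg_left this h1
      _ = 1 := mul_inv_cancel₀ (ne_of_gt h0)

lemma abs_negMulLog_le_one {x : ℝ} (h1 : 0 ≤ x) (h2 : x ≤ 1) : |Real.negMulLog x| ≤ 1 :=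
  abs_le.mpr ⟨by linarith [Real.negMulLog_nonneg h1 h2], negMulLog_le_one h1 h2⟩

lemma integrable_of_bounded {α : Type*} [MeasurableSpace α] {κ : Measure α}
    [IsFiniteMeasure κ] {f : α → ℝ} (hf : Measurable f) (C : ℝ) (h : ∀ z, |f z| ≤ C) :
    Integrable f κ :=
  Integrable.mono' (integrable_const C) hf.aestronglyMeasurable (Filter.Eventually.of_forall h)

lemma toReal_le_one {Ω : Type*} [MeasurableSpace Ω] (μ : Measure Ω)
    [IsProbabilityMeasure μ] (s : Set Ω) : (μ s).toReal ≤ 1 := by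
  have := prob_le_one (μ := μ) (s := s)
  calc (μ s).toReal ≤ (1 : ℝ≥0∞).toReal := ENNReal.toReal_mono (by simp) this
    _ = 1 := by simp

lemma sum_toReal_measure_preimage {Ω : Type*} [MeasurableSpace Ω] (μ : Measure Ω)
    [IsProbabilityMeasure μ] {T : Type*} [Fintype T] [MeasurableSpace T]
    [MeasurableSingletonClass T] {f : Ω → T} (hf : Measurable f) :
    ∑ t : T, (μ (f ⁻¹' {t})).toReal = 1 := by
  rw [← ENNReal.toReal_sum (fun t _ => measure_ne_top μ _)]
  rw [MeasureTheory.sum_measure_preimage_singleton _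
    (fun t _ => hf (measurableSet_singleton t))]
  simp

lemma measure_preimage_comp_eq_sum {γ T U : Type*} [MeasurableSpace γ] (μ' : Measure γ)
    {mT : MeasurableSpace T} [Fintype T] [MeasurableSingletonClass T] [DecidableEq U]
    {f : γ → T} (hf : Measurable f) (h : T → U) (u : U) :
    μ' ((fun x => h (f x)) ⁻¹' {u}) =
      ∑ t ∈ Finset.univ.filter fun t => h t = u, μ' (f ⁻¹' {t}) := by
  rw [MeasureTheory.sum_measure_preimage_singleton _
    (fun t _ => hf (measurableSet_singleton t))]
  congr 1
  ext x
  simp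

lemma entropy_nonneg {Ω : Type*} [MeasurableSpace Ω] (μ : Measure Ω)
    [IsProbabilityMeasure μ] {T : Type*} [Fintype T] (f : Ω → T) :
    0 ≤ entropy μ f :=
  Finset.sum_nonneg fun t _ =>
    Real.negMulLog_nonneg ENNReal.toReal_nonneg (toReal_le_one μ _)

/-- Main "conditioning" step: conditional entropy drop inequality via Gibbs. -/
lemma step {α γ T U : Type*} [MeasurableSpace α] [MeasurableSpace γ]
    [Fintype T] [MeasurableSpace T] [MeasurableSingletonClass T]
    [Fintype U] [DecidableEq U]
    (κ : Measure α) [IsProbabilityMeasure κ] (μ' : Measure γ) [IsProbabilityMeasure μ']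
    (A : α → γ → T) (hA : Measurable (Function.uncurry A)) (h : T → U) :
    ∫ z, (entropy μ' (A z) - entropy μ' (fun x => h (A z x))) ∂κ ≤
      entropy (κ.prod μ') (Function.uncurry A) -
        entropy (κ.prod μ') (fun w => h (Function.uncurry A w)) := by
  classical
  have hAz : ∀ z, Measurable (A z) := fun z => hA.comp measurable_prodMk_left
  set p : T → α → ℝ := fun t z => (μ' (A z ⁻¹' {t})).toReal with hp
  have hp0 : ∀ t z, 0 ≤ p t z := fun t z => ENNReal.toReal_nonneg
  have hp1 : ∀ t z, p t z ≤ 1 := fun t z => toReal_le_one μ' _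
  have hpmeas : ∀ t, Measurable (p t) := by
    intro t
    have hs : MeasurableSet (Function.uncurry A ⁻¹' {t}) :=
      hA (measurableSet_singleton t)
    have := (measurable_measure_prodMk_left (ν := μ') hs).ennreal_toReal
    exact this
  set P : T → ℝ := fun t => ((κ.prod μ') (Function.uncurry A ⁻¹' {t})).toReal with hP
  have hP0 : ∀ t, 0 ≤ P t := fun t => ENNReal.toReal_nonneg
  have hPint : ∀ t, P t = ∫ z, p t z ∂κ := by
    intro t
    have hs : MeasurableSet (Function.uncurry A ⁻¹' {t}) := hA (measurableSet_singleton t)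
    rw [hP]; dsimp only
    rw [Measure.prod_apply hs]
    rw [← MeasureTheory.integral_toReal
      (measurable_measure_prodMk_left hs).aemeasurable
      (Filter.Eventually.of_forall fun z => measure_lt_top μ' _)]
    rfl
  have hpsum : ∀ z, ∑ t, p t z = 1 := fun z =>
    sum_toReal_measure_preimage μ' (hAz z)
  have hPsum : ∑ t, P t = 1 := sum_toReal_measure_preimage (κ.prod μ') hA
  -- q and Q
  set q : U → α → ℝ := fun u z => ∑ t ∈ Finset.univ.filter fun t => h t = u, p t z with hq
  set Q : U → ℝ := fun u => ∑ t ∈ Finset.univ.filter fun t => h t = u, P t with hQ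
  have hqent : ∀ z, entropy μ' (fun x => h (A z x)) = ∑ u : U, Real.negMulLog (q u z) := by
    intro z
    refine Finset.sum_congr rfl fun u _ => ?_
    rw [measure_preimage_comp_eq_sum μ' (hAz z) h u,
      ENNReal.toReal_sum (fun t _ => measure_ne_top μ' _)]
  have hQent : entropy (κ.prod μ') (fun w => h (Function.uncurry A w))
      = ∑ u : U, Real.negMulLog (Q u) := by
    refine Finset.sum_congr rfl fun u _ => ?_
    rw [measure_preimage_comp_eq_sum (κ.prod μ') hA h u,
      ENNReal.toReal_sum (fun t _ => measure_ne_top _ _)]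
  have hpent : ∀ z, entropy μ' (A z) = ∑ t : T, Real.negMulLog (p t z) := fun z => rfl
  have hPent : entropy (κ.prod μ') (Function.uncurry A) = ∑ t : T, Real.negMulLog (P t) := rfl
  -- integrability facts
  have hint_p : ∀ t, Integrable (p t) κ := fun t =>
    integrable_of_bounded (hpmeas t) 1 fun z => abs_le.mpr ⟨by linarith [hp0 t z], hp1 t z⟩
  have hint_nml : ∀ t, Integrable (fun z => Real.negMulLog (p t z)) κ := fun t =>
    integrable_of_bounded (Real.continuous_negMulLog.measurable.comp (hpmeas t)) 1
      fun z => abs_negMulLog_le_one (hp0 t z) (hp1 t z)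
  have hq0 : ∀ u z, 0 ≤ q u z := fun u z => Finset.sum_nonneg fun t _ => hp0 t z
  have hq1 : ∀ u z, q u z ≤ 1 := by
    intro u z
    rw [← hpsum z]
    exact Finset.sum_le_sum_of_subset_of_nonneg (Finset.filter_subset _ _)
      (fun t _ _ => hp0 t z)
  have hqmeas : ∀ u, Measurable (q u) := fun u =>
    Finset.measurable_sum _ fun t _ => hpmeas t
  have hint_q : ∀ u, Integrable (q u) κ := fun u =>
    integrable_of_bounded (hqmeas u) 1 fun z => abs_le.mpr ⟨by linarith [hq0 u z], hq1 u z⟩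
  have hint_nmlq : ∀ u, Integrable (fun z => Real.negMulLog (q u z)) κ := fun u =>
    integrable_of_bounded (Real.continuous_negMulLog.measurable.comp (hqmeas u)) 1
      fun z => abs_negMulLog_le_one (hq0 u z) (hq1 u z)
  have hQq : ∀ u, Q u = ∫ z, q u z ∂κ := by
    intro u
    rw [hQ]; dsimp only
    rw [Finset.sum_congr rfl fun t _ => hPint t]
    rw [← integral_finset_sum _ (fun t _ => hint_p t)]
  -- the pointwise Gibbs function
  set G : α → ℝ := fun z =>
    (∑ t : T, (p t z * Real.log (p t z) - p t z * Real.log (P t))) -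
      ∑ u : U, (q u z * Real.log (q u z) - q u z * Real.log (Q u)) with hG
  -- a.e. nonnegativity
  have hvan : ∀ᵐ z ∂κ, ∀ t, P t = 0 → p t z = 0 := by
    rw [MeasureTheory.ae_all_iff]
    intro t
    by_cases hPt : P t = 0
    · have hint := hint_p t
      have h0 : ∫ z, p t z ∂κ = 0 := by rw [← hPint t]; exact hPt
      have := (MeasureTheory.integral_eq_zero_iff_of_nonneg
        (fun z => hp0 t z) hint).mp h0
      filter_upwards [this] with z hz _
      exact hz
    · filter_upwards with z hz
      exact absurd hz hPt
  have hGnonneg : ∀ᵐ z ∂κ, 0 ≤ G z := by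
    filter_upwards [hvan] with z hz
    have := gibbs_pt h (fun t => p t z) P (fun t => hp0 t z) hP0 (hpsum z) hPsum hz
    rw [hG]; dsimp only
    rw [hq, hQ] at *
    linarith [this]
  -- G is integrable
  have hint_plogP : ∀ t, Integrable (fun z => p t z * Real.log (P t)) κ := fun t =>
    (hint_p t).mul_const _
  have hint_qlogQ : ∀ u, Integrable (fun z => q u z * Real.log (Q u)) κ := fun u =>
    (hint_q u).mul_const _
  have hGpos : 0 ≤ ∫ z, G z ∂κ := integral_nonneg_of_ae hGnonneg
  -- per-term integral identities
  have hint_term1 : ∀ t, Integrable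
      (fun z => p t z * Real.log (p t z) - p t z * Real.log (P t)) κ := fun t =>
    ((hint_nml t).neg.sub (hint_plogP t)).congr (by
      filter_upwards with z
      simp [Real.negMulLog])
  have hint_term2 : ∀ u, Integrable
      (fun z => q u z * Real.log (q u z) - q u z * Real.log (Q u)) κ := fun u =>
    ((hint_nmlq u).neg.sub (hint_qlogQ u)).congr (by
      filter_upwards with z
      simp [Real.negMulLog])
  have i1 : ∀ t, ∫ z, (p t z * Real.log (p t z) - p t z * Real.log (P t)) ∂κ
      = Real.negMulLog (P t) - ∫ z, Real.negMulLog (p t z) ∂κ := by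
    intro t
    have heq : (fun z => p t z * Real.log (p t z) - p t z * Real.log (P t))
        = fun z => (- Real.negMulLog (p t z)) - p t z * Real.log (P t) := by
      funext z; simp [Real.negMulLog]
    have hn1 : Integrable (fun z => - Real.negMulLog (p t z)) κ := (hint_nml t).neg
    rw [heq, integral_sub hn1 (hint_plogP t), integral_neg,
      MeasureTheory.integral_mul_const, ← hPint t]
    simp [Real.negMulLog]; ring
  have i2 : ∀ u, ∫ z, (q u z * Real.log (q u z) - q u z * Real.log (Q u)) ∂κ
      = Real.negMulLog (Q u) - ∫ z, Real.negMulLog (q u z) ∂κ := by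
    intro u
    have heq : (fun z => q u z * Real.log (q u z) - q u z * Real.log (Q u))
        = fun z => (- Real.negMulLog (q u z)) - q u z * Real.log (Q u) := by
      funext z; simp [Real.negMulLog]
    have hn2 : Integrable (fun z => - Real.negMulLog (q u z)) κ := (hint_nmlq u).neg
    rw [heq, integral_sub hn2 (hint_qlogQ u), integral_neg,
      MeasureTheory.integral_mul_const, ← hQq u]
    simp [Real.negMulLog]; ring
  have hiden : ∫ z, G z ∂κ =
      ((∑ t : T, Real.negMulLog (P t)) - ∑ u : U, Real.negMulLog (Q u)) -
        ∫ z, ((∑ t : T, Real.negMulLog (p t z)) - ∑ u : U, Real.negMulLog (q u z)) ∂κ := by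
    have hGfun : G = fun z =>
        (∑ t : T, (p t z * Real.log (p t z) - p t z * Real.log (P t))) -
          ∑ u : U, (q u z * Real.log (q u z) - q u z * Real.log (Q u)) := rfl
    rw [hGfun, integral_sub (integrable_finset_sum _ fun t _ => hint_term1 t)
      (integrable_finset_sum _ fun u _ => hint_term2 u),
      integral_finset_sum _ (fun t _ => hint_term1 t),
      integral_finset_sum _ (fun u _ => hint_term2 u),
      Finset.sum_congr rfl (fun t _ => i1 t), Finset.sum_congr rfl (fun u _ => i2 u),
      integral_sub (integrable_finset_sum _ fun t _ => hint_nml t)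
        (integrable_finset_sum _ fun u _ => hint_nmlq u),
      integral_finset_sum _ (fun t _ => hint_nml t),
      integral_finset_sum _ (fun u _ => hint_nmlq u),
      Finset.sum_sub_distrib, Finset.sum_sub_distrib]
    ring
  -- conclude
  have hfin : ∫ z, (entropy μ' (A z) - entropy μ' (fun x => h (A z x))) ∂κ
      = ∫ z, ((∑ t : T, Real.negMulLog (p t z)) - ∑ u : U, Real.negMulLog (q u z)) ∂κ := by
    refine integral_congr_ae (Filter.Eventually.of_forall fun z => ?_)
    dsimp only
    rw [hpent z, hqent z]
  rw [hfin, hPent, hQent]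
  linarith [hGpos, hiden]

lemma entropy_const {Ω : Type*} [MeasurableSpace Ω] (μ : Measure Ω) [IsProbabilityMeasure μ]
    {T : Type*} [Fintype T] (c : T) [DecidableEq T] :
    entropy μ (fun _ => c) = 0 := by
  unfold entropy
  refine Finset.sum_eq_zero fun s _ => ?_
  rcases eq_or_ne c s with rfl | hcs
  · have : (fun _ : Ω => c) ⁻¹' {c} = Set.univ := by ext ω; simp
    rw [this]
    simp [Real.negMulLog]
  · have : (fun _ : Ω => c) ⁻¹' {s} = ∅ := by ext ω; simp [hcs]
    rw [this]
    simp [Real.negMulLog]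

lemma entropy_comp_snd {α γ : Type*} [MeasurableSpace α] [MeasurableSpace γ]
    (κ : Measure α) [IsProbabilityMeasure κ] (μ' : Measure γ) [SFinite μ']
    {T : Type*} [Fintype T] (f : γ → T) :
    entropy (κ.prod μ') (fun w => f w.2) = entropy μ' f := by
  unfold entropy
  refine Finset.sum_congr rfl fun s _ => ?_
  have : (fun w : α × γ => f w.2) ⁻¹' {s} = Set.univ ×ˢ (f ⁻¹' {s}) := by
    ext ⟨a, b⟩; simp
  rw [this, Measure.prod_prod, measure_univ, one_mul]

lemma entropy_map {Ω Ω' : Type*} [MeasurableSpace Ω] [MeasurableSpace Ω']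
    {μ : Measure Ω} {μ' : Measure Ω'} {f : Ω → Ω'} (hf : MeasurePreserving f μ μ')
    {T : Type*} [Fintype T] [MeasurableSpace T] [MeasurableSingletonClass T]
    (Y : Ω' → T) (hY : Measurable Y) :
    entropy μ' Y = entropy μ (fun ω => Y (f ω)) := by
  unfold entropy
  refine Finset.sum_congr rfl fun s _ => ?_
  rw [← hf.measure_preimage (hY (measurableSet_singleton s)).nullMeasurableSet]
  rfl

lemma step0 {α γ T : Type*} [MeasurableSpace α] [MeasurableSpace γ]
    [Fintype T] [MeasurableSpace T] [MeasurableSingletonClass T]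
    (κ : Measure α) [IsProbabilityMeasure κ] (μ' : Measure γ) [IsProbabilityMeasure μ']
    (A : α → γ → T) (hA : Measurable (Function.uncurry A)) :
    ∫ z, entropy μ' (A z) ∂κ ≤ entropy (κ.prod μ') (Function.uncurry A) := by
  classical
  have h := step κ μ' A hA (fun _ : T => ())
  have e0 : (entropy μ' fun _ : γ => ()) = 0 := entropy_const μ' ()
  have e1 : (entropy (κ.prod μ') fun _ : α × γ => ()) = 0 := entropy_const (κ.prod μ') ()
  simp only [e0, e1, sub_zero] at h
  exact h

lemma entropy_measurable {α γ T : Type*} [MeasurableSpace α] [MeasurableSpace γ]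
    [Fintype T] [MeasurableSpace T] [MeasurableSingletonClass T]
    {μ' : Measure γ} [SFinite μ'] (A : α → γ → T) (hA : Measurable (Function.uncurry A)) :
    Measurable (fun z => entropy μ' (A z)) := by
  unfold entropy
  apply Finset.measurable_sum
  intro s _
  apply Real.continuous_negMulLog.measurable.comp
  have hs : MeasurableSet (Function.uncurry A ⁻¹' {s}) := hA (measurableSet_singleton s)
  have := (measurable_measure_prodMk_left (ν := μ') hs).ennreal_toReal
  exact this

lemma abs_entropy_le {Ω : Type*} [MeasurableSpace Ω] (μ : Measure Ω) [IsProbabilityMeasure μ]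
    {T : Type*} [Fintype T] (f : Ω → T) : |entropy μ f| ≤ Fintype.card T := by
  unfold entropy
  calc |∑ s : T, Real.negMulLog (μ (f ⁻¹' {s})).toReal|
      ≤ ∑ s : T, |Real.negMulLog (μ (f ⁻¹' {s})).toReal| := Finset.abs_sum_le_sum_abs _ _
    _ ≤ ∑ _s : T, (1 : ℝ) := Finset.sum_le_sum fun s _ =>
        abs_negMulLog_le_one ENNReal.toReal_nonneg (toReal_le_one μ _)
    _ = Fintype.card T := by simp

lemma integrable_entropy {α γ T : Type*} [MeasurableSpace α] [MeasurableSpace γ]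
    {κ : Measure α} [IsFiniteMeasure κ]
    [Fintype T] [MeasurableSpace T] [MeasurableSingletonClass T]
    {μ' : Measure γ} [IsProbabilityMeasure μ'] (A : α → γ → T)
    (hA : Measurable (Function.uncurry A)) :
    Integrable (fun z => entropy μ' (A z)) κ :=
  integrable_of_bounded (entropy_measurable A hA) (Fintype.card T)
    fun z => abs_entropy_le μ' (A z)

universe u

lemma key {V : Type*} [Fintype V] [DecidableEq V] {S : Type*} [Fintype S]
    [MeasurableSpace S] [MeasurableSingletonClass S]
    (E' : Finset (Finset V)) (β : ℝ) (hβ0 : 0 ≤ β) :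
    ∀ (m : ℕ) (ζ : Fin m → Type u) (mζ : ∀ i, MeasurableSpace (ζ i))
      (ν : ∀ i, @Measure (ζ i) (mζ i)) (_hν : ∀ i, IsProbabilityMeasure (ν i))
      (W : Fin m → Finset V),
      (∀ (i : Fin m) (Wsub : Finset V), Wsub.Nonempty → Wsub ⊆ W i →
        β * Wsub.card ≤ ((E'.filter fun e => (e ∩ Wsub).Nonempty).card : ℝ)) →
      ∀ (X : V → (∀ i, ζ i) → S),
      (∀ v, Measurable (X v)) →
      (∀ v (ω₁ ω₂ : ∀ i, ζ i), (∀ i, v ∈ W i → ω₁ i = ω₂ i) → X v ω₁ = X v ω₂) →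
      β * ∑ v, entropy (Measure.pi ν) (X v) ≤
        ∑ e ∈ E', entropy (Measure.pi ν) (fun ω => fun v : e => X v ω) := by
  intro m
  induction m with
  | zero =>
    intro ζ mζ ν hν W hβc X hXm hXd
    haveI : ∀ i, IsProbabilityMeasure (ν i) := hν
    haveI : IsProbabilityMeasure (Measure.pi ν) := inferInstance
    classical
    have h1 : ∀ v, entropy (Measure.pi ν) (X v) = 0 := by
      intro v
      have hconst : X v = fun _ => X v (fun i => i.elim0) := by
        funext ω; exact hXd v ω (fun i => i.elim0) (fun i _ => i.elim0)
      rw [hconst]; exact entropy_const _ _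
    have h2 : ∀ e : Finset V, entropy (Measure.pi ν) (fun ω => fun v : e => X v ω) = 0 := by
      intro e
      have hconst : (fun ω => fun v : e => X v.1 ω)
          = fun _ => (fun v : e => X v.1 (fun i => i.elim0)) := by
        funext ω; funext v; exact hXd v.1 ω _ (fun i _ => i.elim0)
      rw [hconst]; exact entropy_const _ _
    simp only [h1, h2, Finset.sum_const_zero, mul_zero]
    exact le_refl 0
  | succ m ih =>
    intro ζ mζ ν hν W hβc X hXm hXd
    haveI : ∀ i, IsProbabilityMeasure (ν i) := hν
    classical
    set l : Fin (m+1) := Fin.last m with hl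
    set κ : Measure (ζ l) := ν l with hκ
    haveI : IsProbabilityMeasure κ := hν l
    set μ' : Measure (∀ j : Fin m, ζ (l.succAbove j)) :=
      Measure.pi (fun j => ν (l.succAbove j)) with hμ'
    haveI : ∀ j, IsProbabilityMeasure (ν (l.succAbove j)) := fun j => hν _
    haveI : IsProbabilityMeasure μ' := by rw [hμ']; infer_instance
    haveI : IsProbabilityMeasure (Measure.pi ν) := inferInstance
    have hMP : MeasurePreserving (MeasurableEquiv.piFinSuccAbove ζ l) (Measure.pi ν)
        (κ.prod μ') := measurePreserving_piFinSuccAbove ν l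
    have hMPs : MeasurePreserving (MeasurableEquiv.piFinSuccAbove ζ l).symm (κ.prod μ')
        (Measure.pi ν) := MeasurePreserving.symm _ hMP
    have hsymm : ∀ w : ζ l × (∀ j, ζ (l.succAbove j)),
        (MeasurableEquiv.piFinSuccAbove ζ l).symm w = l.insertNth w.1 w.2 := by
      intro w
      simp [MeasurableEquiv.piFinSuccAbove, Fin.insertNthEquiv]
    have hins_meas : Measurable
        (fun w : ζ l × (∀ j, ζ (l.succAbove j)) => l.insertNth w.1 w.2) := by
      have heq : (fun w : ζ l × (∀ j, ζ (l.succAbove j)) => l.insertNth w.1 w.2)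
          = (MeasurableEquiv.piFinSuccAbove ζ l).symm := by
        funext w; rw [hsymm w]
      rw [heq]
      exact (MeasurableEquiv.piFinSuccAbove ζ l).symm.measurable
    -- measurability of the uncurried section maps
    have hAvm : ∀ v, Measurable
        (Function.uncurry (fun (z : ζ l) p => X v (l.insertNth z p))) :=
      fun v => (hXm v).comp hins_meas
    have hAem : ∀ e : Finset V, Measurable
        (Function.uncurry (fun (z : ζ l) p => fun v : e => X v.1 (l.insertNth z p))) := by
      intro e
      apply measurable_pi_lambda
      intro v
      exact (hXm v.1).comp hins_meas
    -- entropy quantities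
    set Hv : V → ℝ := fun v => entropy (Measure.pi ν) (X v) with hHvdef
    set He : Finset V → ℝ :=
      fun e => entropy (Measure.pi ν) (fun ω => fun v : e => X v.1 ω) with hHedef
    set hvz : V → ζ l → ℝ :=
      fun v z => entropy μ' (fun p => X v (l.insertNth z p)) with hhvzdef
    set hez : Finset V → ζ l → ℝ :=
      fun e z => entropy μ' (fun p => fun v : e => X v.1 (l.insertNth z p)) with hhezdef
    set Iv : V → ℝ := fun v => ∫ z, hvz v z ∂κ with hIvdef
    set Ie : Finset V → ℝ := fun e => ∫ z, hez e z ∂κ with hIedef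
    -- entropy transfer to the product space
    have hHv : ∀ v, Hv v
        = entropy (κ.prod μ') (Function.uncurry (fun (z : ζ l) p => X v (l.insertNth z p))) := by
      intro v
      have h1 := entropy_map hMPs (X v) (hXm v)
      have h2 : (fun w => X v ((MeasurableEquiv.piFinSuccAbove ζ l).symm w))
          = Function.uncurry (fun (z : ζ l) p => X v (l.insertNth z p)) := by
        funext w; rw [hsymm w]; rfl
      rw [hHvdef]; dsimp only
      rw [h1, h2]
    have hHe : ∀ e : Finset V, He e = entropy (κ.prod μ')
        (Function.uncurry (fun (z : ζ l) p => fun v : e => X v.1 (l.insertNth z p))) := by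
      intro e
      have h1 := entropy_map hMPs (fun ω => fun v : e => X v.1 ω) (by
        apply measurable_pi_lambda
        intro v
        exact hXm v.1)
      have h2 : (fun w => fun v : e => X v.1 ((MeasurableEquiv.piFinSuccAbove ζ l).symm w))
          = Function.uncurry (fun (z : ζ l) p => fun v : e => X v.1 (l.insertNth z p)) := by
        funext w; rw [hsymm w]; rfl
      rw [hHedef]; dsimp only
      rw [h1, h2]
    -- integrability
    have hint_v : ∀ v, Integrable (fun z => hvz v z) κ := fun v =>
      integrable_entropy _ (hAvm v)
    have hint_e : ∀ e : Finset V, Integrable (fun z => hez e z) κ := fun e =>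
      integrable_entropy _ (hAem e)
    -- step0: vertex and edge "a priori" inequalities
    have F1v : ∀ v, Iv v ≤ Hv v := by
      intro v
      rw [hHv v]
      exact step0 κ μ' _ (hAvm v)
    have F1e : ∀ e : Finset V, Ie e ≤ He e := by
      intro e
      rw [hHe e]
      exact step0 κ μ' _ (hAem e)
    -- conditional-entropy drop comparison, for v ∈ e
    have F2 : ∀ (e : Finset V) (v : V) (hv : v ∈ e), Hv v - Iv v ≤ He e - Ie e := by
      intro e v hv
      have hstep := step κ μ' (fun (z : ζ l) p => fun v' : e => X v'.1 (l.insertNth z p))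
        (hAem e) (fun f => f ⟨v, hv⟩)
      have hsub : ∫ z, (hez e z - hvz v z) ∂κ ≤ He e - Hv v := by
        rw [hHe e, hHv v]
        exact hstep
      have hsplit : ∫ z, (hez e z - hvz v z) ∂κ
          = (∫ z, hez e z ∂κ) - ∫ z, hvz v z ∂κ := integral_sub (hint_e e) (hint_v v)
      have hIe' : Ie e = ∫ z, hez e z ∂κ := rfl
      have hIv' : Iv v = ∫ z, hvz v z ∂κ := rfl
      linarith [hsub, hsplit, hIe', hIv']
    -- vanishing for v ∉ W l
    have hζne : Nonempty (ζ l) := by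
      by_contra hemp
      have h0 : (Set.univ : Set (ζ l)) = ∅ :=
        Set.univ_eq_empty_iff.mpr (not_nonempty_iff.mp hemp)
      have h1 : κ Set.univ = 1 := measure_univ
      rw [h0, measure_empty] at h1
      exact zero_ne_one h1
    obtain ⟨z₀⟩ := hζne
    have F4 : ∀ v, v ∉ W l → Hv v - Iv v = 0 := by
      intro v hvW
      have hfun : ∀ z : ζ l, (fun p => X v (l.insertNth z p))
          = (fun p => X v (l.insertNth z₀ p)) := by
        intro z
        funext p
        apply hXd
        intro i hvWi
        rcases eq_or_ne i l with rfl | hil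
        · exact absurd hvWi hvW
        · obtain ⟨j, rfl⟩ := Fin.exists_succAbove_eq hil
          rw [Fin.insertNth_apply_succAbove, Fin.insertNth_apply_succAbove]
      have hconstz : ∀ z, hvz v z = hvz v z₀ := by
        intro z
        rw [hhvzdef]; dsimp only
        rw [hfun z]
      have hIvconst : Iv v = hvz v z₀ := by
        rw [hIvdef]; dsimp only
        rw [integral_congr_ae (Filter.Eventually.of_forall fun z => hconstz z)]
        simp
      have hHvconst : Hv v = hvz v z₀ := by
        rw [hHv v]
        have huncur : Function.uncurry (fun (z : ζ l) p => X v (l.insertNth z p))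
            = fun w : ζ l × (∀ j, ζ (l.succAbove j)) => X v (l.insertNth z₀ w.2) := by
          funext w
          have := congrFun (hfun w.1) w.2
          exact this
        rw [huncur]
        have := entropy_comp_snd κ μ' (fun p => X v (l.insertNth z₀ p))
        rw [this]
      rw [hIvconst, hHvconst]; ring
    -- induction hypothesis, applied for each z and integrated
    have hIH : ∀ z : ζ l, β * ∑ v, hvz v z ≤ ∑ e ∈ E', hez e z := by
      intro z
      exact ih (fun j => ζ (l.succAbove j)) (fun j => mζ _) (fun j => ν _) (fun j => hν _)
        (fun j => W (l.succAbove j)) (fun j Wsub h1 h2 => hβc (l.succAbove j) Wsub h1 h2)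
        (fun v p => X v (l.insertNth z p))
        (fun v => (hXm v).comp (hins_meas.comp measurable_prodMk_left))
        (by
          intro v p₁ p₂ hagree
          apply hXd
          intro i hvW
          rcases eq_or_ne i l with rfl | hil
          · rw [Fin.insertNth_apply_same, Fin.insertNth_apply_same]
          · obtain ⟨j, rfl⟩ := Fin.exists_succAbove_eq hil
            rw [Fin.insertNth_apply_succAbove, Fin.insertNth_apply_succAbove]
            exact hagree j hvW)
    have F5 : β * ∑ v, Iv v ≤ ∑ e ∈ E', Ie e := by
      have hi1 : Integrable (fun z => β * ∑ v, hvz v z) κ :=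
        (integrable_finset_sum _ fun v _ => hint_v v).const_mul β
      have hi2 : Integrable (fun z => ∑ e ∈ E', hez e z) κ :=
        integrable_finset_sum _ fun e _ => hint_e e
      have := integral_mono hi1 hi2 hIH
      rw [MeasureTheory.integral_const_mul, integral_finset_sum _ (fun v _ => hint_v v),
        integral_finset_sum _ (fun e _ => hint_e e)] at this
      exact this
    -- combinatorial redistribution
    have F6 : β * ∑ v, (Hv v - Iv v) ≤ ∑ e ∈ E', (He e - Ie e) := by
      refine comb_aux E' (W l) β hβ0 (fun Wsub h1 h2 => hβc l Wsub h1 h2)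
        ((W l).filter fun v => 0 < Hv v - Iv v).card _ _ (le_refl _) ?_ ?_ ?_ ?_
      · intro e _; linarith [F1e e]
      · intro v; linarith [F1v v]
      · intro v hv; exact F4 v hv
      · intro e _ v hv _; exact F2 e v hv
    -- assemble
    have e1 : ∑ v, Hv v = ∑ v, Iv v + ∑ v, (Hv v - Iv v) := by
      rw [← Finset.sum_add_distrib]
      exact Finset.sum_congr rfl fun v _ => by ring
    have e2 : ∑ e ∈ E', He e = ∑ e ∈ E', Ie e + ∑ e ∈ E', (He e - Ie e) := by
      rw [← Finset.sum_add_distrib]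
      exact Finset.sum_congr rfl fun e _ => by ring
    have e3 : β * ∑ v, Hv v = β * ∑ v, Iv v + β * ∑ v, (Hv v - Iv v) := by
      rw [e1]; ring
    have hfinal : β * ∑ v, Hv v ≤ ∑ e ∈ E', He e := by linarith
    exact hfinal

end Stmt5

open Stmt5 in
/-- Finite entropy inequality, hypergraph version: if each `X_v` is a measurable function of
the independent seeds `(Z_i : v ∈ W_i)`, then for any collection `E'` of hyperedges,
`∑_{e ∈ E'} H(X_e) ≥ β ∑_v H(X_v)`, where
`β = min_{i, ∅ ≠ W ⊆ W_i} |{e ∈ E' : e ∩ W ≠ ∅}| / |W|`. -/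
theorem stmt5 {Ω : Type*} [MeasurableSpace Ω] (μ : Measure Ω) [IsProbabilityMeasure μ]
    {V : Type*} [Fintype V] [DecidableEq V]
    {S : Type*} [Fintype S] [MeasurableSpace S] [MeasurableSingletonClass S]
    (E' : Finset (Finset V))
    {m : ℕ} {ζ : Fin m → Type*} [∀ i, MeasurableSpace (ζ i)]
    (Z : ∀ i, Ω → ζ i) (hZmeas : ∀ i, Measurable (Z i))
    (hZindep : ProbabilityTheory.iIndepFun Z μ)
    (W : Fin m → Finset V)
    (X : V → Ω → S)
    (hX : ∀ v, ∃ g : (∀ i : {i : Fin m // v ∈ W i}, ζ i) → S,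
      Measurable g ∧ X v = fun ω => g (fun i => Z i ω))
    (β : ℝ)
    (hβ : β = sInf {r : ℝ | ∃ (i : Fin m) (Wsub : Finset V), Wsub.Nonempty ∧ Wsub ⊆ W i ∧
      r = ((E'.filter fun e => (e ∩ Wsub).Nonempty).card : ℝ) / Wsub.card}) :
    ∑ e ∈ E', entropy μ (fun ω => fun v : e => X v ω) ≥
      β * ∑ v : V, entropy μ (X v) := by
  classical
  choose g hgm hgX using hX
  set Zt : Ω → ∀ i, ζ i := fun ω i => Z i ω with hZt
  have hZtm : Measurable Zt := measurable_pi_lambda _ fun i => hZmeas i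
  set Y : V → (∀ i, ζ i) → S := fun v ω' => g v (fun i => ω' i.1) with hY
  have hYm : ∀ v, Measurable (Y v) := fun v =>
    (hgm v).comp (measurable_pi_lambda _ fun i => measurable_pi_apply i.1)
  have hYd : ∀ v (ω₁ ω₂ : ∀ i, ζ i), (∀ i, v ∈ W i → ω₁ i = ω₂ i) → Y v ω₁ = Y v ω₂ := by
    intro v ω₁ ω₂ hagr
    rw [hY]; dsimp only
    congr 1
    funext i
    exact hagr i.1 i.2
  have hXY : ∀ v, X v = fun ω => Y v (Zt ω) := fun v => hgX v
  -- the seed distributions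
  haveI : ∀ i, IsProbabilityMeasure (μ.map (Z i)) := fun i =>
    Measure.isProbabilityMeasure_map (hZmeas i).aemeasurable
  have hmap : μ.map Zt = Measure.pi (fun i => μ.map (Z i)) := by
    refine (Measure.pi_eq (μ := fun i => μ.map (Z i)) fun s hs => ?_).symm
    rw [Measure.map_apply hZtm (MeasurableSet.univ_pi hs)]
    have hpre : Zt ⁻¹' (Set.univ.pi s) = ⋂ i, Z i ⁻¹' (s i) := by
      ext ω; simp [Set.mem_univ_pi, hZt]
    rw [hpre]
    have hindep := (ProbabilityTheory.iIndepFun_iff_measure_inter_preimage_eq_mul.mp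
      hZindep) Finset.univ (sets := s) (fun i _ => hs i)
    rw [show (⋂ i, Z i ⁻¹' s i) = ⋂ i ∈ Finset.univ, Z i ⁻¹' s i by simp]
    rw [hindep]
    exact Finset.prod_congr rfl fun i _ => (Measure.map_apply (hZmeas i) (hs i)).symm
  -- properties of β
  have hβ0 : 0 ≤ β := by
    rw [hβ]
    apply Real.sInf_nonneg
    rintro r ⟨i, Wsub, h1, h2, rfl⟩
    positivity
  have hβc : ∀ (i : Fin m) (Wsub : Finset V), Wsub.Nonempty → Wsub ⊆ W i →
      β * Wsub.card ≤ ((E'.filter fun e => (e ∩ Wsub).Nonempty).card : ℝ) := by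
    intro i Wsub h1 h2
    have hmem : (((E'.filter fun e => (e ∩ Wsub).Nonempty).card : ℝ) / Wsub.card)
        ∈ {r : ℝ | ∃ (i : Fin m) (Wsub : Finset V), Wsub.Nonempty ∧ Wsub ⊆ W i ∧
          r = ((E'.filter fun e => (e ∩ Wsub).Nonempty).card : ℝ) / Wsub.card} :=
      ⟨i, Wsub, h1, h2, rfl⟩
    have hbdd : BddBelow {r : ℝ | ∃ (i : Fin m) (Wsub : Finset V), Wsub.Nonempty ∧
        Wsub ⊆ W i ∧ r = ((E'.filter fun e => (e ∩ Wsub).Nonempty).card : ℝ) / Wsub.card} := by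
      refine ⟨0, ?_⟩
      rintro r ⟨i', Ws', h1', h2', rfl⟩
      positivity
    have hle : β ≤ ((E'.filter fun e => (e ∩ Wsub).Nonempty).card : ℝ) / Wsub.card := by
      rw [hβ]; exact csInf_le hbdd hmem
    have hcard : (0:ℝ) < Wsub.card := by exact_mod_cast Finset.card_pos.mpr h1
    calc β * Wsub.card
        ≤ (((E'.filter fun e => (e ∩ Wsub).Nonempty).card : ℝ) / Wsub.card) * Wsub.card :=
          mul_le_mul_of_nonneg_right hle hcard.le
      _ = ((E'.filter fun e => (e ∩ Wsub).Nonempty).card : ℝ) :=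
          div_mul_cancel₀ _ (ne_of_gt hcard)
  -- transfer entropies
  have htrans_v : ∀ v, entropy μ (X v) = entropy (Measure.pi fun i => μ.map (Z i)) (Y v) := by
    intro v
    rw [← hmap]
    unfold entropy
    refine Finset.sum_congr rfl fun s _ => ?_
    rw [Measure.map_apply hZtm (hYm v (measurableSet_singleton s))]
    congr 1
    rw [hXY v]
    rfl
  have htrans_e : ∀ e : Finset V, entropy μ (fun ω => fun v : e => X v.1 ω)
      = entropy (Measure.pi fun i => μ.map (Z i)) (fun ω' => fun v : e => Y v.1 ω') := by
    intro e
    rw [← hmap]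
    unfold entropy
    refine Finset.sum_congr rfl fun s _ => ?_
    have hYe : Measurable (fun ω' => fun v : e => Y v.1 ω') :=
      measurable_pi_lambda _ fun v => hYm v.1
    rw [Measure.map_apply hZtm (hYe (measurableSet_singleton s))]
    have hset : (fun ω => fun v : e => X v.1 ω) ⁻¹' {s}
        = Zt ⁻¹' ((fun ω' => fun v : e => Y v.1 ω') ⁻¹' {s}) := by
      ext ω
      simp only [Set.mem_preimage]
      have hfun : (fun v : e => X v.1 ω) = fun v : e => Y v.1 (Zt ω) := by
        funext v
        rw [hXY v.1]
      rw [hfun]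
    rw [hset]
  have hkey := key E' β hβ0 m ζ (fun i => inferInstance) (fun i => μ.map (Z i))
    (fun i => inferInstance) W hβc Y hYm hYd
  rw [ge_iff_le]
  calc β * ∑ v : V, entropy μ (X v)
      = β * ∑ v : V, entropy (Measure.pi fun i => μ.map (Z i)) (Y v) := by
        rw [Finset.sum_congr rfl fun v _ => htrans_v v]
    _ ≤ ∑ e ∈ E', entropy (Measure.pi fun i => μ.map (Z i)) (fun ω' => fun v : e => Y v.1 ω') :=
        hkey
    _ = ∑ e ∈ E', entropy μ (fun ω => fun v : e => X v.1 ω) := by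
        exact (Finset.sum_congr rfl fun e _ => (htrans_e e)).symm
end

section
/- The function φ(q) = (−2q·log q − (1−2q)·log(1−2q)) / (−q·log q − (1−q)·log(1−q)) − 1 is continuous and strictly monotone decreasing on (0, 1/2), with lim_{q→0+} φ(q) = 1 and lim_{q→1/2−} φ(q) = 0; hence φ maps (0,1/2) bijectively onto (0,1). -/
open Real Filter Set

/-- The function `φ(q) = (−2q log q − (1−2q)log(1−2q))/(−q log q − (1−q)log(1−q)) − 1`. -/
noncomputable def phi (q : ℝ) : ℝ :=
  (-2 * q * Real.log q - (1 - 2 * q) * Real.log (1 - 2 * q)) /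
      (-q * Real.log q - (1 - q) * Real.log (1 - q)) - 1

noncomputable def Nf (q : ℝ) : ℝ := -2 * q * Real.log q - (1 - 2 * q) * Real.log (1 - 2 * q)
noncomputable def Df (q : ℝ) : ℝ := -q * Real.log q - (1 - q) * Real.log (1 - q)

lemma phi_eq (q : ℝ) : phi q = Nf q / Df q - 1 := rfl

lemma contNf : Continuous Nf := by
  have : Nf = fun q => (-2) * (q * Real.log q) - ((fun x => x * Real.log x) (1 - 2*q)) := by
    funext q; simp only [Nf]; ring
  rw [this]
  exact (continuous_const.mul Real.continuous_mul_log).sub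
    (Real.continuous_mul_log.comp (by continuity))

lemma contDf : Continuous Df := by
  have : Df = fun q => (-1) * (q * Real.log q) - ((fun x => x * Real.log x) (1 - q)) := by
    funext q; simp only [Df]; ring
  rw [this]
  exact (continuous_const.mul Real.continuous_mul_log).sub
    (Real.continuous_mul_log.comp (by continuity))

lemma Df_pos {q : ℝ} (h0 : 0 < q) (h1 : q < 1) : 0 < Df q := by
  have l0 : Real.log q < 0 := Real.log_neg h0 h1
  have l1 : Real.log (1 - q) < 0 := Real.log_neg (by linarith) (by linarith)
  have : 0 < -q * Real.log q := by nlinarith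
  have : 0 < -(1 - q) * Real.log (1 - q) := by nlinarith
  simp only [Df]; nlinarith

lemma log_le_two_log {q : ℝ} (h0 : 0 < q) (h1 : q < 1/2) :
    Real.log (1 - 2*q) ≤ 2 * Real.log (1 - q) := by
  have h2 : (0:ℝ) < 1 - 2*q := by linarith
  have h3 : 1 - 2*q ≤ (1-q)^2 := by nlinarith
  calc Real.log (1 - 2*q) ≤ Real.log ((1-q)^2) := Real.log_le_log h2 h3
    _ = 2 * Real.log (1-q) := by
        rw [Real.log_pow]; push_cast; ring

lemma deriv_num_neg {q : ℝ} (h0 : 0 < q) (h1 : q < 1/2) :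
    (2 * Real.log (1 - 2*q) - 2 * Real.log q) * Df q
      - Nf q * (Real.log (1 - q) - Real.log q) < 0 := by
  set L0 := Real.log q
  set L1 := Real.log (1 - q)
  set L2 := Real.log (1 - 2*q)
  have hL0 : L0 < 0 := Real.log_neg h0 (by linarith)
  have hL1 : L1 < 0 := Real.log_neg (by linarith) (by linarith)
  have hc : L2 ≤ 2 * L1 := log_le_two_log h0 h1
  have key : (2 * L2 - 2 * L0) * Df q - Nf q * (L1 - L0)
      = -(L0 * L2 + L1 * L2 - 2 * L0 * L1) := by
    simp only [Df, Nf]; ring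
  rw [key]
  nlinarith [mul_nonneg (neg_nonneg.2 hL0.le) (sub_nonneg.2 hc), mul_pos_of_neg_of_neg hL1 hL1]

lemma hasDerivAt_Nf {q : ℝ} (h0 : 0 < q) (h1 : q < 1/2) :
    HasDerivAt Nf (2 * Real.log (1 - 2*q) - 2 * Real.log q) q := by
  have hq : q ≠ 0 := h0.ne'
  have h2 : (1 - 2*q) ≠ 0 := by linarith [h1]
  have d1 : HasDerivAt (fun x : ℝ => x * Real.log x) (Real.log q + 1) q :=
    Real.hasDerivAt_mul_log hq
  have dinner : HasDerivAt (fun x : ℝ => 1 - 2*x) (-2) q := by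
    exact (((hasDerivAt_id' q).const_mul (2:ℝ)).const_sub 1).congr_deriv (by ring)
  have d2 : HasDerivAt (fun x : ℝ => (1 - 2*x) * Real.log (1 - 2*x))
      ((Real.log (1 - 2*q) + 1) * (-2)) q :=
    by have := (Real.hasDerivAt_mul_log h2).comp q dinner; exact this
  have : HasDerivAt (fun x : ℝ => (-2) * (x * Real.log x) - (1 - 2*x) * Real.log (1 - 2*x))
      ((-2) * (Real.log q + 1) - (Real.log (1 - 2*q) + 1) * (-2)) q :=
    (d1.const_mul (-2:ℝ)).sub d2
  have heq : Nf = fun x : ℝ => (-2) * (x * Real.log x) - (1 - 2*x) * Real.log (1 - 2*x) := by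
    funext x; simp only [Nf]; ring
  rw [heq]
  convert this using 1; ring

lemma hasDerivAt_Df {q : ℝ} (h0 : 0 < q) (h1 : q < 1) :
    HasDerivAt Df (Real.log (1 - q) - Real.log q) q := by
  have hq : q ≠ 0 := h0.ne'
  have h2 : (1 - q) ≠ 0 := by linarith
  have d1 : HasDerivAt (fun x : ℝ => x * Real.log x) (Real.log q + 1) q :=
    Real.hasDerivAt_mul_log hq
  have dinner : HasDerivAt (fun x : ℝ => 1 - x) (-1) q := by
    exact (hasDerivAt_id' q).const_sub 1
  have d2 : HasDerivAt (fun x : ℝ => (1 - x) * Real.log (1 - x))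
      ((Real.log (1 - q) + 1) * (-1)) q :=
    (Real.hasDerivAt_mul_log h2).comp q dinner
  have : HasDerivAt (fun x : ℝ => (-1) * (x * Real.log x) - (1 - x) * Real.log (1 - x))
      ((-1) * (Real.log q + 1) - (Real.log (1 - q) + 1) * (-1)) q :=
    (d1.const_mul (-1:ℝ)).sub d2
  have heq : Df = fun x : ℝ => (-1) * (x * Real.log x) - (1 - x) * Real.log (1 - x) := by
    funext x; simp only [Df]; ring
  rw [heq]
  convert this using 1; ring

lemma contOn_phi : ContinuousOn phi (Set.Ioo 0 (1/2)) := by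
  have : ContinuousOn (fun q => Nf q / Df q - 1) (Set.Ioo 0 (1/2)) := by
    refine ((contNf.continuousOn.div contDf.continuousOn ?_).sub continuousOn_const)
    intro q hq
    exact (Df_pos hq.1 (by linarith [hq.2])).ne'
  exact this

lemma strictAnti_phi : StrictAntiOn phi (Set.Ioo 0 (1/2)) := by
  apply strictAntiOn_of_deriv_neg (convex_Ioo 0 (1/2)) contOn_phi
  rw [interior_Ioo]
  intro q hq
  have h0 := hq.1
  have h1 := hq.2
  have hD : 0 < Df q := Df_pos h0 (by linarith)
  have hphi : HasDerivAt phi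
      (((2 * Real.log (1 - 2*q) - 2 * Real.log q) * Df q
        - Nf q * (Real.log (1 - q) - Real.log q)) / (Df q)^2) q := by
    have := ((hasDerivAt_Nf h0 h1).div (hasDerivAt_Df h0 (by linarith)) hD.ne').sub_const 1
    exact this
  rw [hphi.deriv]
  apply div_neg_of_neg_of_pos (deriv_num_neg h0 h1) (by positivity)

lemma aux_lt_one : ∀ y ∈ Set.Ioo (1/2 : ℝ) 1,
    0 < -2 * y * Real.log y + (2*y - 1) * Real.log (2*y - 1) := by
  have hcont : ContinuousOn (fun y : ℝ => -2 * y * Real.log y + (2*y - 1) * Real.log (2*y - 1))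
      (Set.Icc (1/2) 1) := by
    have : (fun y : ℝ => -2 * y * Real.log y + (2*y - 1) * Real.log (2*y - 1))
        = fun y : ℝ => (-2) * (y * Real.log y) + ((fun x => x * Real.log x) (2*y - 1)) := by
      funext y; ring
    rw [this]
    exact ((continuous_const.mul Real.continuous_mul_log).add
      (Real.continuous_mul_log.comp (by continuity))).continuousOn
  have hanti : StrictAntiOn (fun y : ℝ => -2 * y * Real.log y + (2*y - 1) * Real.log (2*y - 1))
      (Set.Icc (1/2) 1) := by
    apply strictAntiOn_of_deriv_neg (convex_Icc _ _) hcont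
    rw [interior_Icc]
    intro y hy
    have hy1 : (0:ℝ) < 2*y - 1 := by linarith [hy.1]
    have hy0 : (0:ℝ) < y := by linarith [hy.1]
    have d1 : HasDerivAt (fun x : ℝ => x * Real.log x) (Real.log y + 1) y :=
      Real.hasDerivAt_mul_log hy0.ne'
    have dinner : HasDerivAt (fun x : ℝ => 2*x - 1) (2:ℝ) y := by
      simpa using ((hasDerivAt_id y).const_mul (2:ℝ)).sub_const 1
    have d2 : HasDerivAt (fun x : ℝ => (2*x - 1) * Real.log (2*x - 1))
        ((Real.log (2*y - 1) + 1) * 2) y :=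
      by have := (Real.hasDerivAt_mul_log hy1.ne').comp y dinner; exact this
    have hder : HasDerivAt (fun y : ℝ => -2 * y * Real.log y + (2*y - 1) * Real.log (2*y - 1))
        ((-2) * (Real.log y + 1) + (Real.log (2*y - 1) + 1) * 2) y := by
      have := (d1.const_mul (-2:ℝ)).add d2
      have heq : (fun y : ℝ => -2 * y * Real.log y + (2*y - 1) * Real.log (2*y - 1))
          = fun y : ℝ => (-2) * (y * Real.log y) + (2*y - 1) * Real.log (2*y - 1) := by
        funext x; ring
      rw [heq]; exact this
    rw [hder.deriv]
    have : Real.log (2*y - 1) < Real.log y := Real.log_lt_log hy1 (by linarith [hy.2])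
    linarith
  intro y hy
  have h1 : y ∈ Set.Icc (1/2 : ℝ) 1 := ⟨hy.1.le, hy.2.le⟩
  have h2 : (1:ℝ) ∈ Set.Icc (1/2 : ℝ) 1 := by norm_num
  have := hanti h1 h2 hy.2
  simp only [mul_one] at this
  norm_num [Real.log_one] at this
  linarith

lemma phi_mem {q : ℝ} (hq : q ∈ Set.Ioo (0:ℝ) (1/2)) : phi q ∈ Set.Ioo (0:ℝ) 1 := by
  obtain ⟨h0, h1⟩ := hq
  have hD : 0 < Df q := Df_pos h0 (by linarith)
  set L0 := Real.log q
  set L1 := Real.log (1 - q)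
  set L2 := Real.log (1 - 2*q)
  constructor
  · -- phi q > 0 ⇔ Nf q > Df q
    rw [phi_eq, sub_pos, lt_div_iff₀ hD, one_mul]
    have hab : L0 < L1 := Real.log_lt_log h0 (by linarith)
    have hb : L1 < 0 := Real.log_neg (by linarith) (by linarith)
    have hc : L2 ≤ 2 * L1 := log_le_two_log h0 h1
    have expand : Nf q - Df q = -q * L0 + (1 - q) * L1 - (1 - 2*q) * L2 := by
      simp only [Nf, Df]; ring
    nlinarith [mul_pos h0 (sub_pos.2 hab), mul_nonneg (by linarith : (0:ℝ) ≤ 1 - 2*q)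
      (by linarith : (0:ℝ) ≤ 2*L1 - L2), mul_pos (by linarith : (0:ℝ) < 1 - 2*q)
      (neg_pos.2 hb), expand]
  · -- phi q < 1 ⇔ Nf q < 2 Df q
    rw [phi_eq, sub_lt_iff_lt_add, div_lt_iff₀ hD]
    have key := aux_lt_one (1 - q) ⟨by linarith, by linarith⟩
    have e1 : 2*(1-q) - 1 = 1 - 2*q := by ring
    rw [e1] at key
    simp only [Nf, Df]
    nlinarith [key]

lemma tendsto_zero : Filter.Tendsto phi (nhdsWithin 0 (Set.Ioi 0)) (nhds 1) := by
  -- slope limits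
  have slope2 : Tendsto (fun q : ℝ => Real.log (1 - 2*q) / q) (nhdsWithin 0 (Set.Ioi 0))
      (nhds (-2)) := by
    have hd : HasDerivAt (fun x : ℝ => Real.log (1 - 2*x)) (-2) 0 := by
      have dinner : HasDerivAt (fun x : ℝ => 1 - 2*x) (-2) 0 := by
        exact (((hasDerivAt_id' (0:ℝ)).const_mul (2:ℝ)).const_sub 1).congr_deriv (by ring)
      have := (Real.hasDerivAt_log (by norm_num : (1:ℝ) - 2*0 ≠ 0)).comp 0 dinner
      simpa [Function.comp_def] using this
    have := hasDerivAt_iff_tendsto_slope.1 hd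
    have h2 : Tendsto (slope (fun x : ℝ => Real.log (1 - 2*x)) 0) (nhdsWithin 0 (Set.Ioi 0))
        (nhds (-2)) := this.mono_left (nhdsWithin_mono 0 (fun x hx => ne_of_gt hx))
    refine h2.congr' ?_
    filter_upwards [self_mem_nhdsWithin] with q hq
    simp [slope, div_eq_inv_mul]
  have slope1 : Tendsto (fun q : ℝ => Real.log (1 - q) / q) (nhdsWithin 0 (Set.Ioi 0))
      (nhds (-1)) := by
    have hd : HasDerivAt (fun x : ℝ => Real.log (1 - x)) (-1) 0 := by
      have dinner : HasDerivAt (fun x : ℝ => 1 - x) (-1) 0 := by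
        exact (hasDerivAt_id' (0:ℝ)).const_sub 1
      have := (Real.hasDerivAt_log (by norm_num : (1:ℝ) - 0 ≠ 0)).comp 0 dinner
      simpa [Function.comp_def] using this
    have := hasDerivAt_iff_tendsto_slope.1 hd
    have h2 : Tendsto (slope (fun x : ℝ => Real.log (1 - x)) 0) (nhdsWithin 0 (Set.Ioi 0))
        (nhds (-1)) := this.mono_left (nhdsWithin_mono 0 (fun x hx => ne_of_gt hx))
    refine h2.congr' ?_
    filter_upwards [self_mem_nhdsWithin] with q hq
    simp [slope, div_eq_inv_mul]
  have loginv : Tendsto (fun q : ℝ => (Real.log q)⁻¹) (nhdsWithin 0 (Set.Ioi 0)) (nhds 0) := by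
    have h1 : Tendsto (fun q : ℝ => -Real.log q) (nhdsWithin 0 (Set.Ioi 0)) atTop :=
      tendsto_neg_atBot_atTop.comp Real.tendsto_log_nhdsGT_zero
    have h2 : Tendsto (fun q : ℝ => (-Real.log q)⁻¹) (nhdsWithin 0 (Set.Ioi 0)) (nhds 0) :=
      h1.inv_tendsto_atTop
    have h3 := h2.neg
    rw [neg_zero] at h3
    refine h3.congr (fun q => ?_)
    rw [← inv_neg, neg_neg]
  have hid : Tendsto (fun q : ℝ => q) (nhdsWithin 0 (Set.Ioi 0)) (nhds 0) :=
    tendsto_id.mono_left nhdsWithin_le_nhds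
  -- A and B
  have hA : Tendsto (fun q : ℝ => 2 + (1 - 2*q) * (Real.log (1 - 2*q) / q) * (Real.log q)⁻¹)
      (nhdsWithin 0 (Set.Ioi 0)) (nhds 2) := by
    have : Tendsto (fun q : ℝ => (1 - 2*q) * (Real.log (1 - 2*q) / q) * (Real.log q)⁻¹)
        (nhdsWithin 0 (Set.Ioi 0)) (nhds ((1 - 2*0) * (-2) * 0)) := by
      exact (((tendsto_const_nhds.sub (hid.const_mul 2)).mul slope2).mul loginv)
    simp only [mul_zero] at this
    simpa using (tendsto_const_nhds : Tendsto (fun _ : ℝ => (2:ℝ))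
      (nhdsWithin 0 (Set.Ioi 0)) (nhds 2)).add this
  have hB : Tendsto (fun q : ℝ => 1 + (1 - q) * (Real.log (1 - q) / q) * (Real.log q)⁻¹)
      (nhdsWithin 0 (Set.Ioi 0)) (nhds 1) := by
    have : Tendsto (fun q : ℝ => (1 - q) * (Real.log (1 - q) / q) * (Real.log q)⁻¹)
        (nhdsWithin 0 (Set.Ioi 0)) (nhds ((1 - 0) * (-1) * 0)) := by
      exact (((tendsto_const_nhds.sub hid).mul slope1).mul loginv)
    simp only [mul_zero] at this
    simpa using (tendsto_const_nhds : Tendsto (fun _ : ℝ => (1:ℝ))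
      (nhdsWithin 0 (Set.Ioi 0)) (nhds 1)).add this
  have hAB : Tendsto (fun q : ℝ =>
      (2 + (1 - 2*q) * (Real.log (1 - 2*q) / q) * (Real.log q)⁻¹) /
      (1 + (1 - q) * (Real.log (1 - q) / q) * (Real.log q)⁻¹) - 1)
      (nhdsWithin 0 (Set.Ioi 0)) (nhds 1) := by
    have h := (hA.div hB (by norm_num : (1:ℝ) ≠ 0)).sub_const 1
    have e : (2:ℝ)/1 - 1 = 1 := by norm_num
    rwa [e] at h
  refine hAB.congr' ?_
  filter_upwards [Ioo_mem_nhdsGT_of_mem (by norm_num : (0:ℝ) ∈ Set.Ico 0 (1/2))] with q hq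
  obtain ⟨h0, h1⟩ := hq
  have hL0 : Real.log q ≠ 0 := (Real.log_neg h0 (by linarith)).ne
  have hq0 : q ≠ 0 := h0.ne'
  have hfac : -q * Real.log q ≠ 0 := by
    simp only [neg_mul, neg_ne_zero]
    exact mul_ne_zero hq0 hL0
  have eA : Nf q = (-q * Real.log q) *
      (2 + (1 - 2*q) * (Real.log (1 - 2*q) / q) * (Real.log q)⁻¹) := by
    simp only [Nf]; field_simp; ring
  have eB : Df q = (-q * Real.log q) *
      (1 + (1 - q) * (Real.log (1 - q) / q) * (Real.log q)⁻¹) := by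
    simp only [Df]; field_simp; ring
  rw [phi_eq, eA, eB, mul_div_mul_left _ _ hfac]

lemma tendsto_half : Filter.Tendsto phi (nhdsWithin (1/2) (Set.Iio (1/2))) (nhds 0) := by
  have hcont : ContinuousAt phi (1/2) := by
    have hN : ContinuousAt Nf (1/2) := contNf.continuousAt
    have hD : ContinuousAt Df (1/2) := contDf.continuousAt
    have hDval : Df (1/2) = Real.log 2 := by
      simp only [Df]
      rw [show (1:ℝ) - 1/2 = 1/2 by norm_num, show (1:ℝ)/2 = 2⁻¹ by norm_num, Real.log_inv]
      ring
    have hDne : Df (1/2) ≠ 0 := by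
      rw [hDval]; exact (Real.log_pos (by norm_num)).ne'
    have : ContinuousAt (fun q => Nf q / Df q - 1) (1/2) := (hN.div hD hDne).sub continuousAt_const
    exact this
  have hval : phi (1/2) = 0 := by
    rw [phi_eq]
    have hNval : Nf (1/2) = Real.log 2 := by
      simp only [Nf]
      rw [show (1:ℝ) - 2*(1/2) = 0 by norm_num, Real.log_zero,
        show (1:ℝ)/2 = 2⁻¹ by norm_num, Real.log_inv]
      ring
    have hDval : Df (1/2) = Real.log 2 := by
      simp only [Df]
      rw [show (1:ℝ) - 1/2 = 1/2 by norm_num, show (1:ℝ)/2 = 2⁻¹ by norm_num, Real.log_inv]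
      ring
    rw [hNval, hDval, div_self (Real.log_pos (by norm_num)).ne']
    ring
  have h2 : ContinuousWithinAt phi (Set.Iio (1/2)) (1/2) := hcont.continuousWithinAt
  have h3 := h2.tendsto
  rwa [hval] at h3

/-- `φ` is continuous and strictly monotone decreasing on `(0, 1/2)`, with
`lim_{q→0+} φ(q) = 1` and `lim_{q→1/2−} φ(q) = 0`; hence it maps `(0,1/2)` bijectively
onto `(0,1)`. -/
theorem stmt10 :
    ContinuousOn phi (Set.Ioo 0 (1 / 2)) ∧
      StrictAntiOn phi (Set.Ioo 0 (1 / 2)) ∧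
      Filter.Tendsto phi (nhdsWithin 0 (Set.Ioi 0)) (nhds 1) ∧
      Filter.Tendsto phi (nhdsWithin (1 / 2) (Set.Iio (1 / 2))) (nhds 0) ∧
      Set.BijOn phi (Set.Ioo 0 (1 / 2)) (Set.Ioo 0 1) := by
  refine ⟨contOn_phi, strictAnti_phi, tendsto_zero, tendsto_half, ?_⟩
  refine ⟨fun q hq => phi_mem hq, strictAnti_phi.injOn, ?_⟩
  intro y hy
  obtain ⟨hy0, hy1⟩ := hy
  -- find q2 near 1/2 with phi q2 < y
  have ev2 : ∀ᶠ q in nhdsWithin (1/2 : ℝ) (Set.Iio (1/2)),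
      phi q < y ∧ q ∈ Set.Ioo (0:ℝ) (1/2) := by
    filter_upwards [tendsto_half.eventually (eventually_lt_nhds hy0),
      Ioo_mem_nhdsLT_of_mem (by norm_num : (1/2:ℝ) ∈ Set.Ioc (1/4) (1/2))] with q h1 h2
    exact ⟨h1, by constructor <;> [linarith [h2.1]; exact h2.2]⟩
  obtain ⟨q2, hq2⟩ := ev2.exists
  -- find q1 near 0 with phi q1 > y and q1 < q2
  have ev1 : ∀ᶠ q in nhdsWithin (0:ℝ) (Set.Ioi 0),
      y < phi q ∧ q ∈ Set.Ioo (0:ℝ) q2 := by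
    filter_upwards [tendsto_zero.eventually (eventually_gt_nhds hy1),
      Ioo_mem_nhdsGT_of_mem (by exact ⟨le_refl 0, hq2.2.1⟩ : (0:ℝ) ∈ Set.Ico 0 q2)] with q h1 h2
    exact ⟨h1, h2⟩
  obtain ⟨q1, hq1⟩ := ev1.exists
  have hq10 : 0 < q1 := hq1.2.1
  have hq12 : q1 < q2 := hq1.2.2
  have hsub : Set.Icc q1 q2 ⊆ Set.Ioo (0:ℝ) (1/2) := fun x hx =>
    ⟨lt_of_lt_of_le hq10 hx.1, lt_of_le_of_lt hx.2 hq2.2.2⟩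
  have hivt := intermediate_value_Icc' hq12.le (contOn_phi.mono hsub)
  have hyIcc : y ∈ Set.Icc (phi q2) (phi q1) := ⟨hq2.1.le, hq1.1.le⟩
  obtain ⟨x, hx, hxy⟩ := hivt hyIcc
  exact ⟨x, hsub hx, hxy⟩
end

section
/- Asymptotics of φ near 0: φ(q) = 1 + q/log q + O(q/(log q)^2) as q → 0+, where φ(q) = (−2q·log q − (1−2q)·log(1−2q)) / (−q·log q − (1−q)·log(1−q)) − 1. -/
open Asymptotics Real Filter Topology

noncomputable def Nn (q : ℝ) : ℝ := -2 * q * Real.log q - (1 - 2 * q) * Real.log (1 - 2 * q)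
noncomputable def Dd (q : ℝ) : ℝ := -q * Real.log q - (1 - q) * Real.log (1 - q)

lemma taylor2 {x : ℝ} (hx : |x| < 1) :
    |Real.log (1 - x) + x + x ^ 2 / 2| ≤ |x| ^ 3 / (1 - |x|) := by
  have := Real.abs_log_sub_add_sum_range_le hx 2
  have hsum : (∑ i ∈ Finset.range 2, x ^ (i + 1) / (i + 1)) = x + x ^ 2 / 2 := by
    simp [Finset.sum_range_succ]; ring
  rw [hsum] at this
  convert this using 2
  ring

lemma hev : ∀ᶠ q in 𝓝[>] (0:ℝ), 0 < q ∧ q < 1/4 := by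
  filter_upwards [Ioo_mem_nhdsGT_of_mem (show (0:ℝ) ∈ Set.Ico 0 (1/4) by norm_num)] with q hq
  exact ⟨hq.1, hq.2⟩

lemma TA : Tendsto (fun q => Real.log (1 - q) / q) (𝓝[>] (0:ℝ)) (𝓝 (-1)) := by
  have hb : Tendsto (fun q : ℝ => q / 2 + q ^ 2 / (1 - q)) (𝓝[>] (0:ℝ)) (𝓝 0) := by
    have : ContinuousAt (fun q : ℝ => q / 2 + q ^ 2 / (1 - q)) 0 := by
      fun_prop (disch := norm_num)
    have := this.tendsto.mono_left (nhdsWithin_le_nhds : 𝓝[Set.Ioi (0:ℝ)] 0 ≤ 𝓝 0)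
    simpa using this
  have h0 : Tendsto (fun q : ℝ => Real.log (1 - q) / q + 1) (𝓝[>] (0:ℝ)) (𝓝 0) := by
    apply squeeze_zero_norm' _ hb
    filter_upwards [hev] with q ⟨hq0, hq4⟩
    have hq1 : |q| < 1 := by rw [abs_of_pos hq0]; linarith
    have ht := taylor2 hq1
    rw [abs_of_pos hq0] at ht
    have h1q : (0:ℝ) < 1 - q := by linarith
    have : |Real.log (1 - q) + q| ≤ q ^ 2 / 2 + q ^ 3 / (1 - q) := by
      have := abs_sub_abs_le_abs_sub (Real.log (1 - q) + q + q ^ 2 / 2) (q ^ 2 / 2)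
      have h2 : |Real.log (1-q) + q| = |(Real.log (1-q) + q + q^2/2) - q^2/2| := by ring_nf
      rw [h2]
      calc |(Real.log (1-q) + q + q^2/2) - q^2/2| ≤ |Real.log (1-q) + q + q^2/2| + |q^2/2| :=
            abs_sub _ _
        _ ≤ q ^ 3 / (1 - q) + q^2/2 := by
            gcongr
            rw [abs_of_nonneg (by positivity)]
        _ = q ^ 2 / 2 + q ^ 3 / (1 - q) := by ring
    have e : Real.log (1 - q) / q + 1 = (Real.log (1 - q) + q) / q := by field_simp
    rw [norm_eq_abs, e, abs_div, abs_of_pos hq0, div_le_iff₀ hq0]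
    calc |Real.log (1 - q) + q| ≤ q ^ 2 / 2 + q ^ 3 / (1 - q) := by assumption
      _ = (q / 2 + q ^ 2 / (1 - q)) * q := by field_simp
  have := h0.sub_const 1
  simpa using this

lemma TL : Tendsto (fun q => 1 / Real.log q) (𝓝[>] (0:ℝ)) (𝓝 0) := by
  have h1 : Tendsto (fun q : ℝ => -Real.log q) (𝓝[>] (0:ℝ)) atTop :=
    tendsto_neg_atTop_iff.mpr Real.tendsto_log_nhdsGT_zero
  have h2 := h1.inv_tendsto_atTop
  have := h2.neg
  simp only [Pi.inv_apply, neg_neg, inv_neg, neg_zero] at this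
  simpa [one_div] using this

lemma TqL : Tendsto (fun q => q * Real.log q) (𝓝[>] (0:ℝ)) (𝓝 0) := by
  have := (Real.continuous_mul_log.tendsto 0).mono_left (nhdsWithin_le_nhds (s := Set.Ioi 0))
  simpa using this

lemma T2 : Tendsto (fun q => q * Real.log q / Dd q) (𝓝[>] (0:ℝ)) (𝓝 (-1)) := by
  have h1q : Tendsto (fun q : ℝ => 1 - q) (𝓝[>] (0:ℝ)) (𝓝 1) := by
    have hc : Continuous (fun q : ℝ => 1 - q) := by continuity
    have := (hc.tendsto (0:ℝ)).mono_left
      (nhdsWithin_le_nhds : 𝓝[Set.Ioi (0:ℝ)] 0 ≤ 𝓝 0)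
    simpa using this
  have Tw : Tendsto (fun q => (1 - q) * (Real.log (1 - q) / q) * (1 / Real.log q))
      (𝓝[>] (0:ℝ)) (𝓝 0) := by
    have := (h1q.mul TA).mul TL
    simpa using this
  have Tinv : Tendsto (fun q => (-1 - (1 - q) * (Real.log (1 - q) / q) * (1 / Real.log q))⁻¹)
      (𝓝[>] (0:ℝ)) (𝓝 (-1)) := by
    have hden : Tendsto (fun q => -1 - (1 - q) * (Real.log (1 - q) / q) * (1 / Real.log q))
        (𝓝[>] (0:ℝ)) (𝓝 (-1)) := by
      have := (tendsto_const_nhds (x := (-1:ℝ))).sub Tw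
      simpa using this
    have := hden.inv₀ (by norm_num : (-1:ℝ) ≠ 0)
    norm_num at this
    simpa [one_div] using this
  apply Tinv.congr'
  filter_upwards [hev] with q ⟨hq0, hq4⟩
  have hq : q ≠ 0 := ne_of_gt hq0
  have hL : Real.log q ≠ 0 := ne_of_lt (Real.log_neg hq0 (by linarith))
  have hqL : q * Real.log q ≠ 0 := mul_ne_zero hq hL
  have hD : Dd q = (q * Real.log q) * (-1 - (1 - q) * (Real.log (1 - q) / q) * (1 / Real.log q)) := by
    simp only [Dd]
    field_simp
  rw [hD, div_mul_cancel_left₀ hqL]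


lemma T1 : Tendsto (fun q => (Real.log q * (Nn q - 2 * Dd q) - q * Dd q) / q ^ 2)
    (𝓝[>] (0:ℝ)) (𝓝 (-1)) := by
  have h1q : Tendsto (fun q : ℝ => 1 - q) (𝓝[>] (0:ℝ)) (𝓝 1) := by
    have hc : Continuous (fun q : ℝ => 1 - q) := by continuity
    have := (hc.tendsto (0:ℝ)).mono_left
      (nhdsWithin_le_nhds : 𝓝[Set.Ioi (0:ℝ)] 0 ≤ 𝓝 0)
    simpa using this
  have Term1 : Tendsto (fun q => Real.log q * ((Nn q - 2 * Dd q + q ^ 2) / q ^ 2))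
      (𝓝[>] (0:ℝ)) (𝓝 0) := by
    have hb : Tendsto (fun q : ℝ => 13 * |q * Real.log q|) (𝓝[>] (0:ℝ)) (𝓝 0) := by
      have := (TqL.abs).const_mul (13:ℝ)
      simpa using this
    apply squeeze_zero_norm' _ hb
    filter_upwards [hev] with q ⟨hq0, hq4⟩
    have hq1 : |q| < 1 := by rw [abs_of_pos hq0]; linarith
    have hq2 : |2 * q| < 1 := by rw [abs_of_pos (by linarith)]; linarith
    have hA := taylor2 hq1
    have hB := taylor2 hq2
    rw [abs_of_pos hq0] at hA
    rw [abs_of_pos (by linarith : (0:ℝ) < 2 * q)] at hB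
    have h1q' : (0:ℝ) < 1 - q := by linarith
    have h2q' : (0:ℝ) < 1 - 2 * q := by linarith
    have key : |Nn q - 2 * Dd q + q ^ 2| ≤ 13 * q ^ 3 := by
      have hid : Nn q - 2 * Dd q + q ^ 2 =
          -3 * q ^ 3 + 2 * (1 - q) * (Real.log (1 - q) + q + q ^ 2 / 2)
            - (1 - 2 * q) * (Real.log (1 - 2 * q) + 2 * q + (2 * q) ^ 2 / 2) := by
        simp only [Nn, Dd]; ring
      rw [hid]
      have e1 : |2 * (1 - q) * (Real.log (1 - q) + q + q ^ 2 / 2)| ≤ 2 * q ^ 3 := by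
        rw [abs_mul, abs_of_pos (by linarith : (0:ℝ) < 2 * (1 - q))]
        calc 2 * (1 - q) * |Real.log (1 - q) + q + q ^ 2 / 2|
            ≤ 2 * (1 - q) * (q ^ 3 / (1 - q)) := by gcongr
          _ = 2 * q ^ 3 := by field_simp; try ring
      have e2 : |(1 - 2 * q) * (Real.log (1 - 2 * q) + 2 * q + (2 * q) ^ 2 / 2)| ≤ 8 * q ^ 3 := by
        rw [abs_mul, abs_of_pos h2q']
        calc (1 - 2 * q) * |Real.log (1 - 2 * q) + 2 * q + (2 * q) ^ 2 / 2|
            ≤ (1 - 2 * q) * ((2 * q) ^ 3 / (1 - 2 * q)) := by gcongr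
          _ = 8 * q ^ 3 := by field_simp; ring
      have h3 : |(-3 : ℝ) * q ^ 3| ≤ 3 * q ^ 3 := by
        rw [abs_of_nonpos (by nlinarith : (-3 : ℝ) * q ^ 3 ≤ 0)]; linarith
      have h4 := (abs_sub (-3 * q ^ 3 + 2 * (1 - q) * (Real.log (1 - q) + q + q ^ 2 / 2))
        ((1 - 2 * q) * (Real.log (1 - 2 * q) + 2 * q + (2 * q) ^ 2 / 2))).trans
        (add_le_add ((abs_add_le _ _).trans (add_le_add h3 e1)) e2)
      linarith
    rw [norm_eq_abs, abs_mul, abs_div, abs_of_nonneg (by positivity : (0:ℝ) ≤ q ^ 2)]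
    calc |Real.log q| * (|Nn q - 2 * Dd q + q ^ 2| / q ^ 2)
        ≤ |Real.log q| * (13 * q ^ 3 / q ^ 2) := by gcongr
      _ = 13 * |q * Real.log q| := by
          rw [abs_mul, abs_of_pos hq0]
          field_simp
  have Term2 : Tendsto (fun q => (1 - q) * (Real.log (1 - q) / q)) (𝓝[>] (0:ℝ)) (𝓝 (-1)) := by
    have := h1q.mul TA
    simpa using this
  have hsum := Term1.add Term2
  rw [zero_add] at hsum
  apply hsum.congr'
  filter_upwards [hev] with q ⟨hq0, hq4⟩
  have hq : q ≠ 0 := ne_of_gt hq0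
  simp only [Nn, Dd]
  field_simp
  ring

/-- Asymptotics of `φ` near `0`: `φ(q) = 1 + q/log q + O(q/(log q)²)` as `q → 0+`. -/
theorem stmt11 :
    (fun q : ℝ => phi q - (1 + q / Real.log q)) =O[nhdsWithin 0 (Set.Ioi 0)]
      (fun q : ℝ => q / (Real.log q) ^ 2) := by
  have hDne : ∀ᶠ q in 𝓝[>] (0:ℝ), Dd q ≠ 0 := by
    filter_upwards [T2.eventually_ne (by norm_num : (-1:ℝ) ≠ 0)] with q h h0
    apply h
    rw [h0, div_zero]
  have heq : (fun q : ℝ => phi q - (1 + q / Real.log q)) =ᶠ[𝓝[>] (0:ℝ)]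
      fun q => ((Real.log q * (Nn q - 2 * Dd q) - q * Dd q) / q ^ 2) *
        (q * Real.log q / Dd q) * (q / (Real.log q) ^ 2) := by
    filter_upwards [hev, hDne] with q ⟨hq0, hq4⟩ hD
    have hq : q ≠ 0 := ne_of_gt hq0
    have hL : Real.log q ≠ 0 := ne_of_lt (Real.log_neg hq0 (by linarith))
    have hphi : phi q = Nn q / Dd q - 1 := rfl
    rw [hphi]
    field_simp
    ring
  have hO : (fun q => ((Real.log q * (Nn q - 2 * Dd q) - q * Dd q) / q ^ 2) *
      (q * Real.log q / Dd q)) =O[𝓝[>] (0:ℝ)] (fun _ => (1:ℝ)) :=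
    (T1.mul T2).isBigO_one ℝ
  have := hO.mul (isBigO_refl (fun q : ℝ => q / (Real.log q) ^ 2) (𝓝[>] (0:ℝ)))
  exact this.congr' heq.symm (by filter_upwards with q; simp)
end

section
/- Asymptotics of φ near 1/2: φ(1/2 − t) = (−2t·log t)/log 2 + O(t) as t → 0+, where φ(q) = (−2q·log q − (1−2q)·log(1−2q)) / (−q·log q − (1−q)·log(1−q)) − 1. -/
open Asymptotics Real Filter Set

private lemma log_lin_limit (c : ℝ) :
    Tendsto (fun t : ℝ => Real.log (1 + c * t) / t) (nhdsWithin 0 (Set.Ioi 0)) (nhds c) := by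
  have h : HasDerivAt (fun t : ℝ => Real.log (1 + c * t)) c 0 := by
    have h1 : HasDerivAt (fun t : ℝ => 1 + c * t) c 0 := by
      simpa using ((hasDerivAt_id (0:ℝ)).const_mul c).const_add 1
    have h2 := (Real.hasDerivAt_log (by norm_num : (1:ℝ) + c * 0 ≠ 0)).comp 0 h1
    simpa [Function.comp_def] using h2
  have h3 := hasDerivAt_iff_tendsto_slope.mp h
  have h4 : Tendsto (slope (fun t : ℝ => Real.log (1 + c * t)) 0)
      (nhdsWithin 0 (Set.Ioi 0)) (nhds c) :=
    h3.mono_left (nhdsWithin_mono _ (fun x hx => ne_of_gt hx))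
  refine h4.congr' ?_
  filter_upwards [self_mem_nhdsWithin] with t ht
  simp [slope_def_field, (Set.mem_Ioi.mp ht).ne', div_eq_div_iff]

set_option maxHeartbeats 1000000 in
/-- Asymptotics of `φ` near `1/2`: `φ(1/2 − t) = (−2t log t)/log 2 + O(t)` as `t → 0+`. -/
theorem stmt12 :
    (fun t : ℝ => phi (1 / 2 - t) - (-2 * t * Real.log t) / Real.log 2)
      =O[nhdsWithin 0 (Set.Ioi 0)] (fun t : ℝ => t) := by
  set l := nhdsWithin (0:ℝ) (Set.Ioi 0) with hl
  set c := Real.log 2 with hcdef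
  have hcpos : 0 < c := Real.log_pos one_lt_two
  have hc : c ≠ 0 := hcpos.ne'
  -- basic limits
  have hid : Tendsto (fun t : ℝ => t) l (nhds 0) :=
    tendsto_id.mono_right nhdsWithin_le_nhds
  have hA : Tendsto (fun t : ℝ => Real.log (1 - 2*t) / t) l (nhds (-2)) := by
    have := log_lin_limit (-2)
    refine this.congr fun t => ?_
    rw [show (1:ℝ) + -2 * t = 1 - 2*t by ring]
  have hB : Tendsto (fun t : ℝ => Real.log (1 + 2*t) / t) l (nhds 2) :=
    log_lin_limit 2
  have htl : Tendsto (fun t : ℝ => t * Real.log t) l (nhds 0) := by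
    have h := tendsto_log_mul_rpow_nhdsGT_zero zero_lt_one
    simp only [Real.rpow_one] at h
    exact h.congr fun t => mul_comm _ _
  have hA0 : Tendsto (fun t : ℝ => Real.log (1 - 2*t)) l (nhds 0) := by
    have hc1 : ContinuousAt (fun t : ℝ => Real.log (1 - 2*t)) 0 :=
      (Real.continuousAt_log (by norm_num)).comp (by fun_prop)
    have h2 : Tendsto (fun t : ℝ => Real.log (1 - 2*t)) l (nhds (Real.log (1 - 2*0))) :=
      hc1.tendsto.mono_left nhdsWithin_le_nhds
    simpa using h2
  have hB0 : Tendsto (fun t : ℝ => Real.log (1 + 2*t)) l (nhds 0) := by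
    have hc1 : ContinuousAt (fun t : ℝ => Real.log (1 + 2*t)) 0 :=
      (Real.continuousAt_log (by norm_num)).comp (by fun_prop)
    have h2 : Tendsto (fun t : ℝ => Real.log (1 + 2*t)) l (nhds (Real.log (1 + 2*0))) :=
      hc1.tendsto.mono_left nhdsWithin_le_nhds
    simpa using h2
  have hhalfm : Tendsto (fun t : ℝ => 1/2 - t) l (nhds (1/2)) := by
    simpa using (tendsto_const_nhds (x := (1:ℝ)/2) (f := l)).sub hid
  have hhalfp : Tendsto (fun t : ℝ => 1/2 + t) l (nhds (1/2)) := by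
    simpa using (tendsto_const_nhds (x := (1:ℝ)/2) (f := l)).add hid
  -- the model function G
  set G : ℝ → ℝ := fun t =>
    (-4*c^2 - c*(1/2 - t)*(Real.log (1-2*t)/t) + c*(1/2 + t)*(Real.log (1+2*t)/t)
        - 2*(t*Real.log t)*((1/2 - t)*(Real.log (1-2*t)/t) + (1/2 + t)*(Real.log (1+2*t)/t)))
      / (c * (c - (1/2 - t)*Real.log (1-2*t) - (1/2 + t)*Real.log (1+2*t))) with hGdef
  have hGnum : Tendsto (fun t : ℝ =>
      -4*c^2 - c*(1/2 - t)*(Real.log (1-2*t)/t) + c*(1/2 + t)*(Real.log (1+2*t)/t)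
        - 2*(t*Real.log t)*((1/2 - t)*(Real.log (1-2*t)/t) + (1/2 + t)*(Real.log (1+2*t)/t))) l
      (nhds (-4*c^2 - c*(1/2)*(-2) + c*(1/2)*2
        - 2*0*((1/2)*(-2) + (1/2)*2))) := by
    exact (((tendsto_const_nhds.sub ((tendsto_const_nhds.mul hhalfm).mul hA)).add
      ((tendsto_const_nhds.mul hhalfp).mul hB)).sub
      ((tendsto_const_nhds.mul htl).mul ((hhalfm.mul hA).add (hhalfp.mul hB))))
  have hGden : Tendsto (fun t : ℝ =>
      c * (c - (1/2 - t)*Real.log (1-2*t) - (1/2 + t)*Real.log (1+2*t))) l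
      (nhds (c * (c - (1/2)*0 - (1/2)*0))) :=
    tendsto_const_nhds.mul ((tendsto_const_nhds.sub (hhalfm.mul hA0)).sub (hhalfp.mul hB0))
  have hdenne : c * (c - (1/2)*0 - (1/2)*0) ≠ 0 := by
    simp only [mul_zero, sub_zero]
    exact mul_ne_zero hc hc
  have hG : Tendsto G l (nhds ((-4*c^2 - c*(1/2)*(-2) + c*(1/2)*2
        - 2*0*((1/2)*(-2) + (1/2)*2)) / (c * (c - (1/2)*0 - (1/2)*0)))) :=
    hGnum.div hGden hdenne
  -- the ratio equals G eventually
  have heq : (fun t : ℝ =>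
      (phi (1 / 2 - t) - (-2 * t * Real.log t) / c) / t) =ᶠ[l] G := by
    filter_upwards [Ioo_mem_nhdsGT_of_mem (Set.left_mem_Ico.2 (by norm_num : (0:ℝ) < 1/4))]
      with t ht
    obtain ⟨ht0, ht4⟩ := ht
    have h1 : (0:ℝ) < 1 - 2*t := by linarith
    have h2 : (0:ℝ) < 1 + 2*t := by linarith
    have e1 : Real.log (1/2 - t) = Real.log (1 - 2*t) - c := by
      rw [show (1:ℝ)/2 - t = (1 - 2*t)/2 by ring, Real.log_div h1.ne' two_ne_zero]
    have e2 : Real.log (1 - (1/2 - t)) = Real.log (1 + 2*t) - c := by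
      rw [show (1:ℝ) - (1/2 - t) = (1 + 2*t)/2 by ring, Real.log_div h2.ne' two_ne_zero]
    have e3 : Real.log (1 - 2*(1/2 - t)) = c + Real.log t := by
      rw [show (1:ℝ) - 2*(1/2 - t) = 2*t by ring, Real.log_mul two_ne_zero ht0.ne']
    have hq1 : (0:ℝ) < 1/2 - t := by linarith
    have hq2 : (1:ℝ)/2 - t < 1 := by linarith
    have hlq : Real.log (1/2 - t) < 0 := Real.log_neg hq1 hq2
    have hl1q : Real.log (1 - (1/2 - t)) < 0 := Real.log_neg (by linarith) (by linarith)
    have hDpos : 0 < -(1/2 - t) * Real.log (1/2 - t)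
        - (1 - (1/2 - t)) * Real.log (1 - (1/2 - t)) := by
      nlinarith [mul_pos hq1 (neg_pos.2 hlq), mul_pos (by linarith : (0:ℝ) < 1 - (1/2 - t)) (neg_pos.2 hl1q)]
    have key : c - (1/2 - t)*Real.log (1-2*t) - (1/2 + t)*Real.log (1+2*t)
        = -(1/2 - t) * Real.log (1/2 - t) - (1 - (1/2 - t)) * Real.log (1 - (1/2 - t)) := by
      rw [e1, e2]; ring
    have hDne : c - (1/2 - t)*Real.log (1-2*t) - (1/2 + t)*Real.log (1+2*t) ≠ 0 := by
      rw [key]; exact hDpos.ne'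
    have hDne2 : -(1/2 - t) * (Real.log (1 - 2*t) - c)
        - (1 - (1/2 - t)) * (Real.log (1 + 2*t) - c) ≠ 0 := by
      rw [← e1, ← e2]; exact hDpos.ne'
    simp only [hGdef, phi]
    rw [e1, e2, e3]
    set a := Real.log (1 - 2*t) with ha
    set b := Real.log (1 + 2*t) with hb
    set d := Real.log t with hd
    have htne : t ≠ 0 := ht0.ne'
    rw [show -(1/2 - t) * (a - c) - (1 - (1/2 - t)) * (b - c)
        = c - (1/2 - t)*a - (1/2 + t)*b by ring]
    rw [div_sub_one hDne, div_sub_div _ _ hDne hc, div_div,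
      div_eq_div_iff (mul_ne_zero (mul_ne_zero hDne hc) htne) (mul_ne_zero hc hDne)]
    field_simp [htne]
    ring
  have H : Tendsto (fun t : ℝ =>
      (phi (1 / 2 - t) - (-2 * t * Real.log t) / c) / t) l
      (nhds ((-4*c^2 - c*(1/2)*(-2) + c*(1/2)*2
        - 2*0*((1/2)*(-2) + (1/2)*2)) / (c * (c - (1/2)*0 - (1/2)*0)))) :=
    hG.congr' heq.symm
  have h1 : (fun t : ℝ =>
      (phi (1 / 2 - t) - (-2 * t * Real.log t) / c) / t) =O[l] (fun _ => (1:ℝ)) :=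
    H.isBigO_one ℝ
  have h2 := h1.mul (isBigO_refl (fun t : ℝ => t) l)
  refine h2.congr' ?_ ?_
  · filter_upwards [self_mem_nhdsWithin] with t ht
    exact div_mul_cancel₀ _ (ne_of_gt ht)
  · filter_upwards with t
    simp
end

section
/- Let μ be a probability measure on ℝ × ℝ (all relevant second moments finite), with marginals μ1, μ2. Define Δ_{a,b}(μ) = a·(Var(μ1) + Var(μ2)) + b·Cov(μ), where Cov(μ) = ∫ xy dμ − (∫ x dμ1)(∫ y dμ2). Then the functions μ ↦ Δ_{a,b}(μ) − Var(μ1) and μ ↦ Δ_{a,b}(μ) − Var(μ2) are both concave (with respect to convex combinations of measures) if and only if a ≥ 1 and |b| ≤ 2√(a(a−1)). -/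
open MeasureTheory

/-- Variance of the first coordinate under a measure on `ℝ × ℝ`. -/
noncomputable def var1 (μ : Measure (ℝ × ℝ)) : ℝ :=
  (∫ p, p.1 ^ 2 ∂μ) - (∫ p, p.1 ∂μ) ^ 2

/-- Variance of the second coordinate under a measure on `ℝ × ℝ`. -/
noncomputable def var2 (μ : Measure (ℝ × ℝ)) : ℝ :=
  (∫ p, p.2 ^ 2 ∂μ) - (∫ p, p.2 ∂μ) ^ 2

/-- Covariance of the coordinates under a measure on `ℝ × ℝ`. -/
noncomputable def covM (μ : Measure (ℝ × ℝ)) : ℝ :=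
  (∫ p, p.1 * p.2 ∂μ) - (∫ p, p.1 ∂μ) * (∫ p, p.2 ∂μ)

/-- `Δ_{a,b}(μ) = a·(Var(μ₁) + Var(μ₂)) + b·Cov(μ)`. -/
noncomputable def deltaAB (a b : ℝ) (μ : Measure (ℝ × ℝ)) : ℝ :=
  a * (var1 μ + var2 μ) + b * covM μ

/-- Probability measures on `ℝ × ℝ` with finite second moments. -/
def FinMom (μ : Measure (ℝ × ℝ)) : Prop :=
  IsProbabilityMeasure μ ∧ Integrable (fun p => p.1 ^ 2) μ ∧ Integrable (fun p => p.2 ^ 2) μ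

lemma intDirac (f : ℝ × ℝ → ℝ) (p : ℝ × ℝ) : Integrable f (Measure.dirac p) :=
  (integrable_congr (MeasureTheory.ae_eq_dirac f)).2 (integrable_const _)

lemma finMomDirac (p : ℝ × ℝ) : FinMom (Measure.dirac p) :=
  ⟨inferInstance, intDirac _ p, intDirac _ p⟩

lemma int1 {μ : Measure (ℝ × ℝ)} (h : FinMom μ) : Integrable (fun p : ℝ × ℝ => p.1) μ := by
  obtain ⟨hp, h1, h2⟩ := h
  refine Integrable.mono' ((integrable_const (1:ℝ)).add h1) measurable_fst.aestronglyMeasurable ?_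
  filter_upwards with x
  simp only [Real.norm_eq_abs, Pi.add_apply]
  nlinarith [sq_abs x.1, abs_nonneg x.1, sq_nonneg (|x.1| - 1)]

lemma int2 {μ : Measure (ℝ × ℝ)} (h : FinMom μ) : Integrable (fun p : ℝ × ℝ => p.2) μ := by
  obtain ⟨hp, h1, h2⟩ := h
  refine Integrable.mono' ((integrable_const (1:ℝ)).add h2) measurable_snd.aestronglyMeasurable ?_
  filter_upwards with x
  simp only [Real.norm_eq_abs, Pi.add_apply]
  nlinarith [sq_abs x.2, abs_nonneg x.2, sq_nonneg (|x.2| - 1)]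

lemma int12 {μ : Measure (ℝ × ℝ)} (h : FinMom μ) :
    Integrable (fun p : ℝ × ℝ => p.1 * p.2) μ := by
  obtain ⟨hp, h1, h2⟩ := h
  refine Integrable.mono' (h1.add h2) (measurable_fst.mul measurable_snd).aestronglyMeasurable ?_
  filter_upwards with x
  simp only [Real.norm_eq_abs, abs_mul, Pi.add_apply]
  nlinarith [sq_abs x.1, sq_abs x.2, sq_nonneg (|x.1| - |x.2|)]

lemma mixInt {μ ν : Measure (ℝ × ℝ)} {t : ℝ} (ht0 : 0 ≤ t) (ht1 : t ≤ 1)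
    (f : ℝ × ℝ → ℝ) (hf1 : Integrable f μ) (hf2 : Integrable f ν) :
    ∫ p, f p ∂(ENNReal.ofReal t • μ + ENNReal.ofReal (1 - t) • ν)
      = t * ∫ p, f p ∂μ + (1 - t) * ∫ p, f p ∂ν := by
  rw [integral_add_measure (hf1.smul_measure ENNReal.ofReal_ne_top)
      (hf2.smul_measure ENNReal.ofReal_ne_top), integral_smul_measure, integral_smul_measure,
    ENNReal.toReal_ofReal ht0, ENNReal.toReal_ofReal (by linarith)]
  simp [smul_eq_mul]

lemma Qpos {a b : ℝ} (ha : 1 ≤ a) (hb : b ^ 2 ≤ 4 * (a * (a - 1))) (X Y : ℝ) :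
    0 ≤ (a - 1) * X ^ 2 + b * (X * Y) + a * Y ^ 2 := by
  nlinarith [sq_nonneg (2 * a * Y + b * X), sq_nonneg X, sq_nonneg Y,
    mul_nonneg (by nlinarith : (0:ℝ) ≤ 4 * (a * (a - 1)) - b ^ 2) (sq_nonneg X)]

lemma alg1 (a b t x1 y1 x2 y2 P1 S1 R1 P2 S2 R2 : ℝ) (ht0 : 0 ≤ t) (ht1 : t ≤ 1)
    (hQ : 0 ≤ (a - 1) * (x1 - x2) ^ 2 + b * ((x1 - x2) * (y1 - y2)) + a * (y1 - y2) ^ 2) :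
    a * (((t * P1 + (1 - t) * P2) - (t * x1 + (1 - t) * x2) ^ 2) +
        ((t * S1 + (1 - t) * S2) - (t * y1 + (1 - t) * y2) ^ 2)) +
      b * ((t * R1 + (1 - t) * R2) - (t * x1 + (1 - t) * x2) * (t * y1 + (1 - t) * y2)) -
      ((t * P1 + (1 - t) * P2) - (t * x1 + (1 - t) * x2) ^ 2) ≥
    t * (a * ((P1 - x1 ^ 2) + (S1 - y1 ^ 2)) + b * (R1 - x1 * y1) - (P1 - x1 ^ 2)) +
      (1 - t) * (a * ((P2 - x2 ^ 2) + (S2 - y2 ^ 2)) + b * (R2 - x2 * y2) - (P2 - x2 ^ 2)) := by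
  nlinarith [mul_nonneg (mul_nonneg ht0 (by linarith : (0:ℝ) ≤ 1 - t)) hQ]

lemma alg2 (a b t x1 y1 x2 y2 P1 S1 R1 P2 S2 R2 : ℝ) (ht0 : 0 ≤ t) (ht1 : t ≤ 1)
    (hQ : 0 ≤ (a - 1) * (y1 - y2) ^ 2 + b * ((y1 - y2) * (x1 - x2)) + a * (x1 - x2) ^ 2) :
    a * (((t * P1 + (1 - t) * P2) - (t * x1 + (1 - t) * x2) ^ 2) +
        ((t * S1 + (1 - t) * S2) - (t * y1 + (1 - t) * y2) ^ 2)) +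
      b * ((t * R1 + (1 - t) * R2) - (t * x1 + (1 - t) * x2) * (t * y1 + (1 - t) * y2)) -
      ((t * S1 + (1 - t) * S2) - (t * y1 + (1 - t) * y2) ^ 2) ≥
    t * (a * ((P1 - x1 ^ 2) + (S1 - y1 ^ 2)) + b * (R1 - x1 * y1) - (S1 - y1 ^ 2)) +
      (1 - t) * (a * ((P2 - x2 ^ 2) + (S2 - y2 ^ 2)) + b * (R2 - x2 * y2) - (S2 - y2 ^ 2)) := by
  nlinarith [mul_nonneg (mul_nonneg ht0 (by linarith : (0:ℝ) ≤ 1 - t)) hQ]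

/-- `Δ_{a,b} − Var∘π₁` and `Δ_{a,b} − Var∘π₂` are both concave with respect to convex
combinations of probability measures with finite second moments if and only if
`a ≥ 1` and `|b| ≤ 2√(a(a−1))`. -/
theorem stmt13 (a b : ℝ) :
    ((∀ μ ν : Measure (ℝ × ℝ), FinMom μ → FinMom ν → ∀ t : ℝ, t ∈ Set.Icc (0 : ℝ) 1 →
        deltaAB a b (ENNReal.ofReal t • μ + ENNReal.ofReal (1 - t) • ν) -
            var1 (ENNReal.ofReal t • μ + ENNReal.ofReal (1 - t) • ν) ≥
          t * (deltaAB a b μ - var1 μ) + (1 - t) * (deltaAB a b ν - var1 ν)) ∧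
      (∀ μ ν : Measure (ℝ × ℝ), FinMom μ → FinMom ν → ∀ t : ℝ, t ∈ Set.Icc (0 : ℝ) 1 →
        deltaAB a b (ENNReal.ofReal t • μ + ENNReal.ofReal (1 - t) • ν) -
            var2 (ENNReal.ofReal t • μ + ENNReal.ofReal (1 - t) • ν) ≥
          t * (deltaAB a b μ - var2 μ) + (1 - t) * (deltaAB a b ν - var2 ν)))
      ↔ (1 ≤ a ∧ |b| ≤ 2 * Real.sqrt (a * (a - 1))) := by
  constructor
  · rintro ⟨h1, -⟩
    -- extract positive semidefiniteness of (a-1)X² + bXY + aY²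
    have key : ∀ X Y : ℝ, 0 ≤ (a - 1) * X ^ 2 + b * (X * Y) + a * Y ^ 2 := by
      intro X Y
      have h := h1 (Measure.dirac (X, Y)) (Measure.dirac (0, 0)) (finMomDirac _) (finMomDirac _)
        (1/2) (by constructor <;> norm_num)
      have e1 : ∀ f : ℝ × ℝ → ℝ,
          ∫ p, f p ∂(ENNReal.ofReal (1/2 : ℝ) • Measure.dirac (X, Y)
            + ENNReal.ofReal (1 - 1/2 : ℝ) • Measure.dirac ((0 : ℝ), (0 : ℝ)))
          = (1/2) * f (X, Y) + (1 - 1/2) * f (0, 0) := by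
        intro f
        rw [mixInt (by norm_num) (by norm_num) f (intDirac _ _) (intDirac _ _),
          integral_dirac, integral_dirac]
      simp only [deltaAB, var1, var2, covM, e1 (fun p => p.1 ^ 2), e1 (fun p => p.2 ^ 2),
        e1 (fun p => p.1), e1 (fun p => p.2), e1 (fun p => p.1 * p.2),
        integral_dirac] at h
      nlinarith [h]
    have ha : 1 ≤ a := by have := key 1 0; nlinarith
    have hb2 : b ^ 2 ≤ 4 * (a * (a - 1)) := by
      have hd := discrim_le_zero (a := a - 1) (b := b) (c := a)
        (fun x => by nlinarith [key x 1])
      rw [discrim] at hd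
      nlinarith
    refine ⟨ha, ?_⟩
    have hs : Real.sqrt (b ^ 2) ≤ Real.sqrt (4 * (a * (a - 1))) := Real.sqrt_le_sqrt hb2
    rwa [Real.sqrt_sq_eq_abs, show (4 : ℝ) * (a * (a - 1)) = 2 ^ 2 * (a * (a - 1)) by ring,
      Real.sqrt_mul (by positivity), Real.sqrt_sq (by norm_num)] at hs
  · rintro ⟨ha, hb⟩
    have hb2 : b ^ 2 ≤ 4 * (a * (a - 1)) := by
      have h1 : |b| ^ 2 ≤ (2 * Real.sqrt (a * (a - 1))) ^ 2 :=
        pow_le_pow_left₀ (abs_nonneg b) hb 2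
      rw [sq_abs, mul_pow, Real.sq_sqrt (by nlinarith)] at h1
      nlinarith
    constructor
    · intro μ ν hμ hν t ht
      obtain ⟨ht0, ht1⟩ := ht
      have ht1' : (0:ℝ) ≤ 1 - t := by linarith
      simp only [deltaAB, var1, var2, covM,
        mixInt ht0 ht1 (fun p : ℝ × ℝ => p.1 ^ 2) hμ.2.1 hν.2.1,
        mixInt ht0 ht1 (fun p : ℝ × ℝ => p.2 ^ 2) hμ.2.2 hν.2.2,
        mixInt ht0 ht1 (fun p : ℝ × ℝ => p.1) (int1 hμ) (int1 hν),
        mixInt ht0 ht1 (fun p : ℝ × ℝ => p.2) (int2 hμ) (int2 hν),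
        mixInt ht0 ht1 (fun p : ℝ × ℝ => p.1 * p.2) (int12 hμ) (int12 hν)]
      exact alg1 a b t _ _ _ _ _ _ _ _ _ _ ht0 ht1 (Qpos ha hb2 _ _)
    · intro μ ν hμ hν t ht
      obtain ⟨ht0, ht1⟩ := ht
      simp only [deltaAB, var1, var2, covM,
        mixInt ht0 ht1 (fun p : ℝ × ℝ => p.1 ^ 2) hμ.2.1 hν.2.1,
        mixInt ht0 ht1 (fun p : ℝ × ℝ => p.2 ^ 2) hμ.2.2 hν.2.2,
        mixInt ht0 ht1 (fun p : ℝ × ℝ => p.1) (int1 hμ) (int1 hν),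
        mixInt ht0 ht1 (fun p : ℝ × ℝ => p.2) (int2 hμ) (int2 hν),
        mixInt ht0 ht1 (fun p : ℝ × ℝ => p.1 * p.2) (int12 hμ) (int12 hν)]
      exact alg2 a b t _ _ _ _ _ _ _ _ _ _ ht0 ht1 (Qpos ha hb2 _ _)
end

section
/- Independent set density bound from expansion: Suppose X_v, v ∈ V, taking values in {0,1}, form an independent set on a finite d-regular graph G = (V,E) (i.e., X_u·X_v = 0 almost surely for every edge {u,v}), with P(X_v = 1) = q ∈ (0,1/2) for all v, and suppose the entropy inequality ∑_{{u,v}∈E} H(X_u,X_v) ≥ β ∑_{v∈V} H(X_v) holds with β = d(1+τ)/2 for some τ ∈ (0,1). Then φ(q) ≥ τ, and hence q ≤ φ^{-1}(τ) < 1/2, where φ(q) = (−2q log q − (1−2q)log(1−2q))/(−q log q − (1−q)log(1−q)) − 1 and φ^{-1} is its inverse on (0,1/2). -/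
open MeasureTheory Real

/-- The set of endpoints of an edge, as a finset. -/
def edgeVerts {V : Type*} [Fintype V] [DecidableEq V] (e : Sym2 V) : Finset V :=
  Finset.univ.filter (· ∈ e)

lemma denom_pos {x : ℝ} (hx : x ∈ Set.Ioo (0:ℝ) (1/2)) :
    0 < -x * Real.log x - (1 - x) * Real.log (1 - x) := by
  obtain ⟨h0, h1⟩ := hx
  have hx1 : x < 1 := by linarith
  have l1 : Real.log x < 0 := Real.log_neg h0 hx1
  have l2 : Real.log (1 - x) < 0 := Real.log_neg (by linarith) (by linarith)
  nlinarith

lemma phi_hasDeriv {x : ℝ} (hx : x ∈ Set.Ioo (0:ℝ) (1/2)) :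
    HasDerivAt phi
      (((2*Real.log (1-2*x) - 2*Real.log x) * (-x * Real.log x - (1 - x) * Real.log (1 - x))
        - (-2 * x * Real.log x - (1 - 2 * x) * Real.log (1 - 2 * x)) * (Real.log (1-x) - Real.log x))
       / (-x * Real.log x - (1 - x) * Real.log (1 - x))^2) x := by
  obtain ⟨h0, h1⟩ := hx
  have hx0 : x ≠ 0 := ne_of_gt h0
  have hx1 : (1 - x) ≠ 0 := by norm_num; intro h; linarith
  have hx2 : (1 - 2*x) ≠ 0 := by intro h; linarith
  -- derivative of numerator
  have hN : HasDerivAt (fun y => -2 * y * Real.log y - (1 - 2 * y) * Real.log (1 - 2 * y))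
      (2*Real.log (1-2*x) - 2*Real.log x) x := by
    have d1 : HasDerivAt (fun y : ℝ => y * Real.log y) (Real.log x + 1) x :=
      Real.hasDerivAt_mul_log hx0
    have d2 : HasDerivAt (fun y : ℝ => (1 - 2*y) * Real.log (1 - 2*y))
        ((Real.log (1 - 2*x) + 1) * (-2)) x := by
      have inner : HasDerivAt (fun y : ℝ => 1 - 2*y) (-2) x := by
        simpa using ((hasDerivAt_id x).const_mul (2:ℝ)).const_sub 1
      exact (Real.hasDerivAt_mul_log hx2).comp x inner
    have := (d1.const_mul (-2:ℝ)).sub d2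
    convert this using 1
    · rfl
    · rfl
    · ext y; simp only [Pi.sub_apply]; ring
    · ring
  have hD : HasDerivAt (fun y => -y * Real.log y - (1 - y) * Real.log (1 - y))
      (Real.log (1-x) - Real.log x) x := by
    have d1 : HasDerivAt (fun y : ℝ => y * Real.log y) (Real.log x + 1) x :=
      Real.hasDerivAt_mul_log hx0
    have d2 : HasDerivAt (fun y : ℝ => (1 - y) * Real.log (1 - y))
        ((Real.log (1 - x) + 1) * (-1)) x := by
      have inner : HasDerivAt (fun y : ℝ => 1 - y) (-1) x := by
        simpa using (hasDerivAt_id x).const_sub 1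
      exact (Real.hasDerivAt_mul_log hx1).comp x inner
    have := (d1.const_mul (-1:ℝ)).sub d2
    convert this using 1
    · rfl
    · rfl
    · ext y; simp only [Pi.sub_apply]; ring
    · ring
  have hDne : (-x * Real.log x - (1 - x) * Real.log (1 - x)) ≠ 0 :=
    ne_of_gt (denom_pos ⟨h0, h1⟩)
  have := (hN.div hD hDne).sub_const 1
  convert this using 1
  · rfl
  · rfl
  · funext y; rfl

lemma phi_strictAntiOn : StrictAntiOn phi (Set.Ioo (0:ℝ) (1/2)) := by
  apply strictAntiOn_of_deriv_neg (convex_Ioo _ _)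
  · intro x hx
    exact (phi_hasDeriv hx).differentiableAt.continuousAt.continuousWithinAt
  · intro x hx
    rw [interior_Ioo] at hx
    rw [(phi_hasDeriv hx).deriv]
    obtain ⟨h0, h1⟩ := hx
    apply div_neg_of_neg_of_pos
    · set a := -Real.log x with ha
      set b := -Real.log (1-x) with hb
      set c := -Real.log (1-2*x) with hc
      have hab : b < a := by
        have := Real.log_lt_log h0 (show x < 1 - x by linarith)
        simp only [ha, hb]; linarith
      have hb0 : 0 < b := by
        have := Real.log_neg (show (0:ℝ) < 1 - x by linarith) (by linarith)
        simp only [hb]; linarith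
      have hcb : 2*b < c := by
        have hsq : 1 - 2*x < (1-x)^2 := by nlinarith
        have := Real.log_lt_log (show (0:ℝ) < 1 - 2*x by linarith) hsq
        rw [show ((1:ℝ)-x)^2 = (1-x)*(1-x) by ring,
          Real.log_mul (by linarith) (by linarith)] at this
        simp only [hb, hc]; linarith
      have key : (2*Real.log (1-2*x) - 2*Real.log x) * (-x * Real.log x - (1 - x) * Real.log (1 - x))
        - (-2 * x * Real.log x - (1 - 2 * x) * Real.log (1 - 2 * x)) * (Real.log (1-x) - Real.log x)
        = 2*a*b - a*c - b*c := by
        simp only [ha, hb, hc]; ring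
      rw [key]
      nlinarith
    · exact pow_pos (denom_pos ⟨h0, h1⟩) 2

section Helpers
variable {Ω : Type*} [MeasurableSpace Ω] (μ : Measure Ω) [IsProbabilityMeasure μ]

lemma entropy_comp_equiv {S T : Type*} [Fintype S] [Fintype T] (e : S ≃ T) (X : Ω → S) :
    entropy μ (fun ω => e (X ω)) = entropy μ X := by
  unfold entropy
  rw [← Equiv.sum_comp e]
  apply Finset.sum_congr rfl
  intro s _
  have : (fun ω => e (X ω)) ⁻¹' {e s} = X ⁻¹' {s} := by ext ω; simp
  rw [this]

lemma entropy_bernoulli (Y : Ω → Bool) (hY : Measurable Y) (q : ℝ) (hq0 : 0 ≤ q) (hq1 : q ≤ 1)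
    (h : μ (Y ⁻¹' {true}) = ENNReal.ofReal q) :
    entropy μ Y = Real.negMulLog q + Real.negMulLog (1 - q) := by
  have hfalse : Y ⁻¹' {false} = (Y ⁻¹' {true})ᶜ := by
    ext ω; simp
  have hmc : μ (Y ⁻¹' {false}) = ENNReal.ofReal (1 - q) := by
    rw [hfalse, prob_compl_eq_one_sub (hY (MeasurableSet.singleton true)), h,
      ENNReal.ofReal_sub 1 hq0, ENNReal.ofReal_one]
  unfold entropy
  rw [Fintype.sum_bool, h, hmc, ENNReal.toReal_ofReal hq0, ENNReal.toReal_ofReal (by linarith : (0:ℝ) ≤ 1 - q)]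

lemma entropy_pair (Xu Xv : Ω → Bool) (hu : Measurable Xu) (hv : Measurable Xv)
    (q : ℝ) (hq : q ∈ Set.Ioo (0:ℝ) (1/2))
    (h0 : μ (Xu ⁻¹' {true} ∩ Xv ⁻¹' {true}) = 0)
    (hqu : μ (Xu ⁻¹' {true}) = ENNReal.ofReal q)
    (hqv : μ (Xv ⁻¹' {true}) = ENNReal.ofReal q) :
    entropy μ (fun ω => (Xu ω, Xv ω)) =
      2 * Real.negMulLog q + Real.negMulLog (1 - 2*q) := by
  obtain ⟨hq0, hq1⟩ := hq
  set A := Xu ⁻¹' {true} with hA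
  set B := Xv ⁻¹' {true} with hB
  have mA : MeasurableSet A := hu (MeasurableSet.singleton true)
  have mB : MeasurableSet B := hv (MeasurableSet.singleton true)
  have pre : ∀ b1 b2 : Bool, (fun ω => (Xu ω, Xv ω)) ⁻¹' {(b1, b2)} =
      Xu ⁻¹' {b1} ∩ Xv ⁻¹' {b2} := by
    intro b1 b2; ext ω; simp [Prod.ext_iff]
  have hfu : Xu ⁻¹' {false} = Aᶜ := by ext ω; simp [hA]
  have hfv : Xv ⁻¹' {false} = Bᶜ := by ext ω; simp [hB]
  -- μ (A \ B) = q
  have hdiff1 : μ (A ∩ Bᶜ) = ENNReal.ofReal q := by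
    have := measure_inter_add_diff A mB (μ := μ)
    rw [h0, zero_add] at this
    rw [← Set.diff_eq, this, hqu]
  have hdiff2 : μ (Aᶜ ∩ B) = ENNReal.ofReal q := by
    have := measure_inter_add_diff B mA (μ := μ)
    rw [Set.inter_comm, h0, zero_add] at this
    rw [Set.inter_comm, ← Set.diff_eq, this, hqv]
  have hunion : μ (A ∪ B) = ENNReal.ofReal (2*q) := by
    have := measure_union_add_inter A mB (μ := μ)
    rw [h0, add_zero, hqu, hqv, ← ENNReal.ofReal_add (le_of_lt hq0) (le_of_lt hq0)] at this
    rw [this, two_mul]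
  have hcc : μ (Aᶜ ∩ Bᶜ) = ENNReal.ofReal (1 - 2*q) := by
    rw [← Set.compl_union, prob_compl_eq_one_sub (mA.union mB), hunion,
      ENNReal.ofReal_sub 1 (by linarith), ENNReal.ofReal_one]
  unfold entropy
  rw [Fintype.sum_prod_type, Fintype.sum_bool, Fintype.sum_bool, Fintype.sum_bool]
  rw [pre true true, pre true false, pre false true, pre false false]
  rw [hfu, hfv, h0, hdiff1, hdiff2, hcc]
  rw [ENNReal.toReal_ofReal (le_of_lt hq0), ENNReal.toReal_ofReal (by linarith : (0:ℝ) ≤ 1 - 2*q)]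
  simp [Real.negMulLog_zero]
  ring

lemma mem_edgeVerts_iff {V : Type*} [Fintype V] [DecidableEq V] (u v w : V) :
    w ∈ edgeVerts s(u, v) ↔ w = u ∨ w = v := by
  simp [edgeVerts, Sym2.mem_iff]

noncomputable def edgePairEquiv {V : Type*} [Fintype V] [DecidableEq V] (u v : V) (huv : u ≠ v) :
    ((edgeVerts s(u, v) : Finset V) → Bool) ≃ Bool × Bool where
  toFun f := (f ⟨u, (mem_edgeVerts_iff u v u).2 (Or.inl rfl)⟩,
              f ⟨v, (mem_edgeVerts_iff u v v).2 (Or.inr rfl)⟩)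
  invFun p := fun w => if (w : V) = u then p.1 else p.2
  left_inv f := by
    funext w
    obtain ⟨w, hw⟩ := w
    rcases (mem_edgeVerts_iff u v w).1 hw with h | h
    · subst h; simp
    · subst h; simp [huv.symm]
  right_inv p := by
    simp [huv.symm]

lemma entropy_edge {V : Type*} [Fintype V] [DecidableEq V] (u v : V) (huv : u ≠ v)
    (X : V → Ω → Bool) :
    entropy μ (fun ω => fun w : edgeVerts s(u, v) => X w ω) =
      entropy μ (fun ω => (X u ω, X v ω)) := by
  have := entropy_comp_equiv μ ((edgePairEquiv u v huv).symm) (fun ω => (X u ω, X v ω))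
  rw [← this]
  congr 1
  funext ω
  funext w
  obtain ⟨w, hw⟩ := w
  show X w ω = (edgePairEquiv u v huv).symm (X u ω, X v ω) ⟨w, hw⟩
  rcases (mem_edgeVerts_iff u v w).1 hw with h | h <;> subst h <;>
    simp [edgePairEquiv, huv.symm]

end Helpers

/-- Independent-set density bound from expansion: if `{0,1}`-valued variables `X_v` form an
independent set on a finite `d`-regular graph with at least one edge, each with
`P(X_v = 1) = q ∈ (0,1/2)`, and the entropy inequality
`∑_{{u,v}∈E} H(X_u,X_v) ≥ β ∑_v H(X_v)` holds with `β = d(1+τ)/2`, `τ ∈ (0,1)`, then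
`φ(q) ≥ τ`, and hence `q ≤ φ⁻¹(τ)` (i.e. `q ≤ q'` for any `q' ∈ (0,1/2)` with
`φ(q') = τ`). -/
theorem stmt17 {Ω : Type*} [MeasurableSpace Ω] (μ : Measure Ω) [IsProbabilityMeasure μ]
    {V : Type*} [Fintype V] [DecidableEq V]
    (G : SimpleGraph V) [DecidableRel G.Adj] (d : ℕ) (hreg : G.IsRegularOfDegree d)
    (hE : G.edgeFinset.Nonempty)
    (X : V → Ω → Bool) (hX : ∀ v, Measurable (X v))
    (hind : ∀ u v, G.Adj u v → μ {ω | X u ω = true ∧ X v ω = true} = 0)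
    (q : ℝ) (hq : q ∈ Set.Ioo (0 : ℝ) (1 / 2))
    (hdens : ∀ v, μ (X v ⁻¹' {true}) = ENNReal.ofReal q)
    (τ : ℝ) (hτ : τ ∈ Set.Ioo (0 : ℝ) 1)
    (hineq : ∑ e ∈ G.edgeFinset, entropy μ (fun ω => fun v : edgeVerts e => X v ω) ≥
      ((d : ℝ) * (1 + τ) / 2) * ∑ v : V, entropy μ (X v)) :
    τ ≤ phi q ∧ ∀ q' ∈ Set.Ioo (0 : ℝ) (1 / 2), phi q' = τ → q ≤ q' := by
  obtain ⟨hq0, hq2⟩ := hq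
  obtain ⟨hτ0, hτ1⟩ := hτ
  set H1 := Real.negMulLog q + Real.negMulLog (1 - q) with hH1
  set H2 := 2 * Real.negMulLog q + Real.negMulLog (1 - 2*q) with hH2
  have hsumV : ∑ v : V, entropy μ (X v) = (Fintype.card V : ℝ) * H1 := by
    rw [Finset.sum_congr rfl (fun v _ =>
      entropy_bernoulli μ (X v) (hX v) q hq0.le (by linarith) (hdens v))]
    rw [Finset.sum_const, Finset.card_univ, nsmul_eq_mul]
  have hsumE : ∑ e ∈ G.edgeFinset, entropy μ (fun ω => fun v : edgeVerts e => X v ω)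
      = (G.edgeFinset.card : ℝ) * H2 := by
    rw [Finset.sum_congr rfl (fun e he => ?_), Finset.sum_const, nsmul_eq_mul]
    induction e using Sym2.ind with
    | _ u v =>
      have hadj : G.Adj u v := by
        rwa [SimpleGraph.mem_edgeFinset, SimpleGraph.mem_edgeSet] at he
      rw [entropy_edge μ u v hadj.ne X]
      apply entropy_pair μ _ _ (hX u) (hX v) q ⟨hq0, hq2⟩ _ (hdens u) (hdens v)
      have hset : X u ⁻¹' {true} ∩ X v ⁻¹' {true} = {ω | X u ω = true ∧ X v ω = true} := by
        ext ω; simp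
      rw [hset]
      exact hind u v hadj
  have hcard : (d : ℝ) * (Fintype.card V : ℝ) = 2 * (G.edgeFinset.card : ℝ) := by
    have h := G.sum_degrees_eq_twice_card_edges
    rw [Finset.sum_congr rfl (fun v _ => hreg v), Finset.sum_const, Finset.card_univ,
      smul_eq_mul] at h
    exact_mod_cast (by rw [mul_comm] at h; exact_mod_cast h)
  have hEpos : 0 < (G.edgeFinset.card : ℝ) := by
    exact_mod_cast Finset.card_pos.2 hE
  have hlogq : Real.log q < 0 := Real.log_neg hq0 (by linarith)
  have hlog1q : Real.log (1 - q) < 0 := Real.log_neg (by linarith) (by linarith)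
  have hH1pos : 0 < H1 := by
    simp only [hH1, Real.negMulLog]
    nlinarith
  rw [hsumV, hsumE] at hineq
  have hmain : (1 + τ) * H1 ≤ H2 := by
    have h2 : ((d : ℝ) * (1 + τ) / 2) * ((Fintype.card V : ℝ) * H1)
        = (G.edgeFinset.card : ℝ) * ((1 + τ) * H1) := by
      have hr : ((d : ℝ) * (1 + τ) / 2) * ((Fintype.card V : ℝ) * H1)
          = ((d : ℝ) * (Fintype.card V : ℝ)) * ((1 + τ) * H1) / 2 := by ring
      rw [hr, hcard]; ring
    rw [h2] at hineq
    exact le_of_mul_le_mul_left (by linarith [hineq]) hEpos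
  have hphi : phi q = H2 / H1 - 1 := by
    have hnum : -2 * q * Real.log q - (1 - 2 * q) * Real.log (1 - 2 * q) = H2 := by
      simp only [hH2, Real.negMulLog]; ring
    have hden : -q * Real.log q - (1 - q) * Real.log (1 - q) = H1 := by
      simp only [hH1, Real.negMulLog]; ring
    rw [phi, hnum, hden]
  have hτphi : τ ≤ phi q := by
    rw [hphi]
    rw [le_sub_iff_add_le, ← sub_nonneg]
    have : (1 + τ) ≤ H2 / H1 := (le_div_iff₀ hH1pos).2 (by linarith [hmain])
    linarith
  refine ⟨hτphi, fun q' hq' hphiq' => ?_⟩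
  by_contra hlt
  push_neg at hlt
  have := phi_strictAntiOn hq' ⟨hq0, hq2⟩ hlt
  linarith
end
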